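/- arXiv:1510.08234 — 8 statements merged into one kernel-verified Lean document; each statement's English description precedes it below -/
import Mathlib

section
/- Let r0 > 0, ρ > 0, φ ∈ 𝒦(0,r0) and x̄ ∈ argmin f. If φ′(f(x))·‖∂⁰f(x)‖ ≥ 1 for every x ∈ B(x̄,ρ) with 0 < f(x) < r0, then dist(x, S) ≤ φ(f(x)) for every x ∈ B(x̄,ρ) with 0 < f(x) < r0. (Theorem 3.2(i): the Kurdyka–Łojasiewicz inequality implies an error bound.) -/
open Metric Set Filter
open scoped RealInnerProductSpace
open scoped Topology

noncomputable section

variable {H : Type*} [NormedAddCommGroup H] [InnerProductSpace ℝ H] [CompleteSpace H]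

set_option maxHeartbeats 1600000

lemma prox_exists (f : H → EReal) (hbot : ∀ x, f x ≠ ⊥)
    (hlsc : LowerSemicontinuous f)
    (hconv : ∀ x y : H, ∀ t : ℝ, 0 < t → t < 1 →
      f (t • x + (1 - t) • y) ≤ (t : EReal) * f x + ((1 - t : ℝ) : EReal) * f y)
    (hnonneg : ∀ y, 0 ≤ f y) (z0 : H) (hz0 : f z0 = 0)
    (μ : ℝ) (hμ : 0 < μ) (x : H) :
    ∃ p : H, f p ≠ ⊤ ∧ ∀ y : H, f p + ((⟪μ • (x - p), y - p⟫ : ℝ) : EReal) ≤ f y := by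
  set c : ℝ := μ / 2 with hc_def
  have hc : 0 < c := by positivity
  have hμc : μ = 2 * c := by rw [hc_def]; ring
  clear_value c
  clear hc_def
  set g : H → ℝ := fun y => (f y).toReal + c * ‖y - x‖ ^ 2 with hg_def
  have hfinR : ∀ w : H, f w ≠ ⊤ → f w = (((f w).toReal : ℝ) : EReal) :=
    fun w hw => (EReal.coe_toReal hw (hbot w)).symm
  have htoR_nonneg : ∀ w : H, 0 ≤ (f w).toReal := by
    intro w
    by_cases hw : f w = ⊤
    · simp [hw]
    · have := EReal.toReal_le_toReal (hnonneg w) (by simp) hw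
      simpa using this
  have hg_nonneg : ∀ w : H, 0 ≤ g w := by
    intro w
    have h1 := htoR_nonneg w
    have h2 : (0:ℝ) ≤ c * ‖w - x‖ ^ 2 := by positivity
    simp only [hg_def]; linarith
  -- midpoint / convex combination real form
  have hmid : ∀ y₁ y₂ : H, ∀ t : ℝ, 0 < t → t < 1 → f y₁ ≠ ⊤ → f y₂ ≠ ⊤ →
      f (t • y₁ + (1 - t) • y₂) ≠ ⊤ ∧
      (f (t • y₁ + (1 - t) • y₂)).toReal ≤ t * (f y₁).toReal + (1 - t) * (f y₂).toReal := by
    intro y₁ y₂ t ht0 ht1 h₁ h₂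
    have h := hconv y₁ y₂ t ht0 ht1
    rw [hfinR y₁ h₁, hfinR y₂ h₂, ← EReal.coe_mul, ← EReal.coe_mul, ← EReal.coe_add] at h
    refine ⟨ne_top_of_le_ne_top (EReal.coe_ne_top _) h, ?_⟩
    have := EReal.toReal_le_toReal h (hbot _) (EReal.coe_ne_top _)
    rwa [EReal.toReal_coe] at this
  -- the infimum
  set D : Set H := {y | f y ≠ ⊤} with hD_def
  have hz0D : z0 ∈ D := by simp [hD_def, hz0]
  have hA_ne : (g '' D).Nonempty := ⟨g z0, z0, hz0D, rfl⟩
  have hA_bdd : BddBelow (g '' D) := ⟨0, by rintro _ ⟨w, -, rfl⟩; exact hg_nonneg w⟩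
  set m : ℝ := sInf (g '' D) with hm_def
  have hm_le : ∀ w ∈ D, m ≤ g w := fun w hw => csInf_le hA_bdd ⟨w, hw, rfl⟩
  -- minimizing sequence
  have hseq : ∀ n : ℕ, ∃ w, w ∈ D ∧ g w < m + 1 / (n + 1) := by
    intro n
    have hlt : m < m + 1 / (n + 1) := by
      have : (0:ℝ) < 1 / (n + 1) := by positivity
      linarith
    obtain ⟨_, ⟨w, hw, rfl⟩, hwlt⟩ := exists_lt_of_csInf_lt hA_ne hlt
    exact ⟨w, hw, hwlt⟩
  choose w hwD hwlt using hseq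
  clear_value m
  clear hm_def
  -- strong convexity estimate between two points of D
  have hstrong : ∀ y₁ y₂, y₁ ∈ D → y₂ ∈ D →
      c / 4 * ‖y₁ - y₂‖ ^ 2 ≤ (g y₁ - m) / 2 + (g y₂ - m) / 2 := by
    intro y₁ y₂ h₁ h₂
    have hm2 := hmid y₁ y₂ (1/2) (by norm_num) (by norm_num) h₁ h₂
    set q : H := (1/2 : ℝ) • y₁ + (1 - 1/2 : ℝ) • y₂ with hq_def
    have hqD : q ∈ D := hm2.1
    have hmle := hm_le q hqD
    have hnorm : ‖q - x‖ ^ 2 =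
        1/2 * ‖y₁ - x‖ ^ 2 + 1/2 * ‖y₂ - x‖ ^ 2 - 1/4 * ‖y₁ - y₂‖ ^ 2 := by
      have hq : q - x = (1/2 : ℝ) • ((y₁ - x) + (y₂ - x)) := by
        rw [hq_def]; module
      have hd : y₁ - y₂ = (y₁ - x) - (y₂ - x) := by abel
      rw [hq, hd, norm_smul]
      have e1 := norm_add_sq_real (y₁ - x) (y₂ - x)
      have e2 := norm_sub_sq_real (y₁ - x) (y₂ - x)
      simp only [Real.norm_eq_abs]
      rw [mul_pow, show |(1:ℝ)/2| = 1/2 from abs_of_pos (by norm_num)]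
      linear_combination (1/4) * e1 + (1/4) * e2
    have hgq : g q ≤ 1/2 * g y₁ + 1/2 * g y₂ - c/4 * ‖y₁ - y₂‖ ^ 2 := by
      simp only [hg_def]
      have := hm2.2
      nlinarith [this]
    have hcomb := hmle.trans hgq
    linarith [hcomb]
  -- the minimizing sequence is Cauchy
  have hcauchy : CauchySeq w := by
    rw [Metric.cauchySeq_iff]
    intro ε hε
    obtain ⟨N, hN⟩ := exists_nat_gt (4 / (c * ε ^ 2))
    refine ⟨N, fun i hi j hj => ?_⟩
    have hb : ∀ k : ℕ, N ≤ k → g (w k) - m < 1 / (N + 1) := by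
      intro k hk
      have h1 := hwlt k
      have : (1:ℝ) / (k + 1) ≤ 1 / (N + 1) := by
        apply one_div_le_one_div_of_le (by positivity)
        exact_mod_cast Nat.succ_le_succ hk
      linarith
    have h := hstrong (w i) (w j) (hwD i) (hwD j)
    have hbi := hb i hi
    have hbj := hb j hj
    have hsq : c / 4 * ‖w i - w j‖ ^ 2 < 1 / (N + 1) := by linarith
    have hNpos : (0:ℝ) < (N:ℝ) + 1 := by positivity
    have hklt : 4 / (c * ε ^ 2) < (N:ℝ) + 1 := by linarith
    have : ‖w i - w j‖ ^ 2 < ε ^ 2 := by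
      have h4N : (0:ℝ) < 4 * ((N:ℝ) + 1) := by positivity
      have e1 := mul_lt_mul_of_pos_right hsq h4N
      have e1' : c * ‖w i - w j‖ ^ 2 * ((N:ℝ) + 1) < 4 := by
        have heq : (1:ℝ) / ((N:ℝ) + 1) * (4 * ((N:ℝ) + 1)) = 4 := by field_simp
        nlinarith [e1]
      have e2 := mul_lt_mul_of_pos_right hklt (show (0:ℝ) < c * ε ^ 2 by positivity)
      have e2' : (4:ℝ) < ((N:ℝ) + 1) * (c * ε ^ 2) := by
        have heq : (4:ℝ) / (c * ε ^ 2) * (c * ε ^ 2) = 4 := by field_simp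
        nlinarith [e2]
      have hK : (0:ℝ) < c * ((N:ℝ) + 1) := by positivity
      have hKs : c * ((N:ℝ) + 1) * ‖w i - w j‖ ^ 2 < c * ((N:ℝ) + 1) * ε ^ 2 := by
        nlinarith [e1', e2']
      exact lt_of_mul_lt_mul_left hKs hK.le
    rw [dist_eq_norm]
    exact lt_of_pow_lt_pow_left₀ 2 hε.le this
  obtain ⟨p, hp⟩ := cauchySeq_tendsto_of_complete hcauchy
  -- limit value estimate : f p + c‖p-x‖² ≤ m
  have hgw_tendsto : Tendsto (fun n => c * ‖w n - x‖ ^ 2) atTop (𝓝 (c * ‖p - x‖ ^ 2)) := by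
    have h1 : Tendsto (fun n => w n - x) atTop (𝓝 (p - x)) := hp.sub tendsto_const_nhds
    have h2 : Tendsto (fun n => ‖w n - x‖) atTop (𝓝 ‖p - x‖) := h1.norm
    exact ((h2.pow 2).const_mul c)
  have hkey : f p + ((c * ‖p - x‖ ^ 2 : ℝ) : EReal) ≤ (m : EReal) := by
    by_contra hcon
    push_neg at hcon
    -- extract a real strictly between
    have hBlt : ((m - c * ‖p - x‖ ^ 2 : ℝ) : EReal) < f p := by
      by_contra hB
      push_neg at hB
      have : f p + ((c * ‖p - x‖ ^ 2 : ℝ) : EReal) ≤ (m : EReal) := by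
        calc f p + ((c * ‖p - x‖ ^ 2 : ℝ) : EReal)
            ≤ ((m - c * ‖p - x‖ ^ 2 : ℝ) : EReal) + ((c * ‖p - x‖ ^ 2 : ℝ) : EReal) := by
              exact add_le_add_left hB _
          _ = (m : EReal) := by rw [← EReal.coe_add]; norm_num
      exact absurd this (not_le.mpr hcon)
    obtain ⟨q, hq1, hq2⟩ := EReal.exists_between_coe_real hBlt
    rw [EReal.coe_lt_coe_iff] at hq1
    have hev1 : ∀ᶠ n in atTop, (q : EReal) < f (w n) :=
      hp.eventually (hlsc p (q : EReal) hq2)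
    obtain ⟨δ, hδeq⟩ : ∃ δ : ℝ, δ = q + c * ‖p - x‖ ^ 2 - m := ⟨_, rfl⟩
    have hδpos : 0 < δ := by rw [hδeq]; linarith only [hq1]
    have hev2 : ∀ᶠ n in atTop, c * ‖p - x‖ ^ 2 - δ/2 < c * ‖w n - x‖ ^ 2 := by
      exact hgw_tendsto.eventually_const_lt (by linarith : c * ‖p - x‖ ^ 2 - δ/2 < c * ‖p - x‖ ^ 2)
    have hev3 : ∀ᶠ n : ℕ in atTop, (1:ℝ) / ((n:ℝ) + 1) < δ/2 :=
      tendsto_one_div_add_atTop_nhds_zero_nat.eventually_lt_const (by linarith : (0:ℝ) < δ/2)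
    obtain ⟨n, h1, h23⟩ := (hev1.and (hev2.and hev3)).exists
    obtain ⟨h2, h3⟩ := h23
    have hq_an : q < (f (w n)).toReal := by
      have := hfinR (w n) (hwD n)
      rw [this] at h1
      exact_mod_cast h1
    have hup : m + δ/2 > g (w n) := by
      have h4 := hwlt n
      linarith only [h4, h3]
    have hglow : g (w n) > q + (c * ‖p - x‖ ^ 2 - δ/2) := by
      show (f (w n)).toReal + c * ‖w n - x‖ ^ 2 > q + (c * ‖p - x‖ ^ 2 - δ/2)
      linarith only [hq_an, h2]
    linarith only [hup, hglow, hδeq]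
  have hpD : f p ≠ ⊤ := by
    intro hT
    rw [hT, EReal.top_add_coe] at hkey
    exact absurd hkey (not_le.mpr (EReal.coe_lt_top m))
  have hap : (f p).toReal + c * ‖p - x‖ ^ 2 ≤ m := by
    rw [hfinR p hpD, ← EReal.coe_add] at hkey
    exact EReal.coe_le_coe_iff.mp hkey
  refine ⟨p, hpD, ?_⟩
  intro y
  by_cases hyD : f y = ⊤
  · rw [hyD]; exact le_top
  · have hforall : ∀ t : ℝ, 0 < t → t < 1 →
        (f p).toReal - (f y).toReal - 2 * c * ⟪p - x, y - p⟫ ≤ c * t * ‖y - p‖ ^ 2 := by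
      intro t ht0 ht1
      have hmid' := hmid y p t ht0 ht1 hyD hpD
      have hmle' := hm_le _ hmid'.1
      have hqx : t • y + (1 - t) • p - x = (p - x) + t • (y - p) := by module
      have hnorm : ‖t • y + (1 - t) • p - x‖ ^ 2
          = ‖p - x‖ ^ 2 + 2 * (t * ⟪p - x, y - p⟫) + t ^ 2 * ‖y - p‖ ^ 2 := by
        rw [hqx, norm_add_sq_real, real_inner_smul_right, norm_smul, Real.norm_eq_abs,
          abs_of_pos ht0, mul_pow]
      have hgq : g (t • y + (1 - t) • p)
          = (f (t • y + (1 - t) • p)).toReal + c * ‖t • y + (1 - t) • p - x‖ ^ 2 := rfl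
      have h5 : (f p).toReal + c * ‖p - x‖ ^ 2 ≤
          t * (f y).toReal + (1 - t) * (f p).toReal +
            c * (‖p - x‖ ^ 2 + 2 * (t * ⟪p - x, y - p⟫) + t ^ 2 * ‖y - p‖ ^ 2) := by
        have h6 := hap.trans hmle'
        rw [hgq, hnorm] at h6
        have h7 := hmid'.2
        nlinarith [h6, h7, hc]
      have hG : 0 ≤ t * ((f y).toReal - (f p).toReal + 2 * c * ⟪p - x, y - p⟫
          + c * t * ‖y - p‖ ^ 2) := by nlinarith [h5]
      have := (mul_nonneg_iff_of_pos_left ht0).mp hG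
      linarith only [this]
    have hK : (f p).toReal - (f y).toReal - 2 * c * ⟪p - x, y - p⟫ ≤ 0 := by
      by_contra hKpos
      push_neg at hKpos
      obtain ⟨K, hKeq⟩ : ∃ K : ℝ, K = (f p).toReal - (f y).toReal - 2 * c * ⟪p - x, y - p⟫ :=
        ⟨_, rfl⟩
      obtain ⟨C, hCeq⟩ : ∃ C : ℝ, C = c * ‖y - p‖ ^ 2 := ⟨_, rfl⟩
      have hC : 0 ≤ C := by rw [hCeq]; positivity
      have hKpos' : 0 < K := by rw [hKeq]; linarith only [hKpos]
      set t0 : ℝ := min (1/2) (K / (2 * (C + 1))) with ht0_def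
      have ht0pos : 0 < t0 := lt_min (by norm_num) (by positivity)
      have ht0lt1 : t0 < 1 := lt_of_le_of_lt (min_le_left _ _) (by norm_num)
      have h1 : K ≤ t0 * C := by
        have := hforall t0 ht0pos ht0lt1
        rw [← hKeq] at this
        calc K ≤ c * t0 * ‖y - p‖ ^ 2 := this
        _ = t0 * C := by rw [hCeq]; ring
      have h2 : t0 ≤ K / (2 * (C + 1)) := min_le_right _ _
      have h3 : t0 * (2 * (C + 1)) ≤ K := by
        rw [← le_div_iff₀ (by positivity : (0:ℝ) < 2 * (C + 1))]
        exact h2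
      linarith only [h1, h3, hKpos', ht0pos, hC]
    have key : (f p).toReal + ⟪μ • (x - p), y - p⟫ ≤ (f y).toReal := by
      have hinner : ⟪μ • (x - p), y - p⟫ = -(2 * c * ⟪p - x, y - p⟫) := by
        rw [real_inner_smul_left, hμc, show x - p = -(p - x) by abel, inner_neg_left]
        ring
      rw [hinner]
      linarith only [hK]
    rw [hfinR p hpD, hfinR y hyD, ← EReal.coe_add, EReal.coe_le_coe_iff]
    exact key


/-- The convex subdifferential of an extended-real-valued function:
`∂f(x) = {u : f(y) ≥ f(x) + ⟨u, y - x⟩ for all y}`. -/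
def subdiff (f : H → EReal) (x : H) : Set H :=
  {u | ∀ y : H, f x + ((⟪u, y - x⟫ : ℝ) : EReal) ≤ f y}

/-- The set of global minimizers of `f`. -/
def argminSet (f : H → EReal) : Set H := {x | ∀ y, f x ≤ f y}

/-- **Theorem 3.2 (i)**: for a proper lower-semicontinuous convex function with
`min f = 0`, the Kurdyka–Łojasiewicz inequality on `B(x̄,ρ) ∩ [0 < f < r₀]`
implies the error bound `dist(x, argmin f) ≤ φ(f(x))` on the same set.
The KL inequality `φ'(f(x))·‖∂⁰f(x)‖ ≥ 1` (with `‖∂⁰f(x)‖ = dist(0, ∂f(x))`,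
equal to `+∞` when `∂f(x) = ∅`) is expressed equivalently as
`φ'(f(x))·‖u‖ ≥ 1` for every `u ∈ ∂f(x)`. -/
theorem stmt0 (f : H → EReal)
    (hbot : ∀ x, f x ≠ ⊥) (htop : ∃ x, f x ≠ ⊤)
    (hlsc : LowerSemicontinuous f)
    (hconv : ∀ x y : H, ∀ t : ℝ, 0 < t → t < 1 →
      f (t • x + (1 - t) • y) ≤ (t : EReal) * f x + ((1 - t : ℝ) : EReal) * f y)
    (hmin : ∃ z, z ∈ argminSet f ∧ f z = 0)
    (r0 ρ : ℝ) (hr0 : 0 < r0) (hρ : 0 < ρ)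
    (φ φ' : ℝ → ℝ)
    (hφcont : ContinuousOn φ (Ico 0 r0))
    (hφderiv : ∀ s ∈ Ioo (0 : ℝ) r0, HasDerivAt φ (φ' s) s)
    (hφ'cont : ContinuousOn φ' (Ioo 0 r0))
    (hφconc : ConcaveOn ℝ (Ico 0 r0) φ)
    (hφ0 : φ 0 = 0)
    (hφ'pos : ∀ s ∈ Ioo (0 : ℝ) r0, 0 < φ' s)
    (xbar : H) (hxbar : xbar ∈ argminSet f)
    (hKL : ∀ x ∈ closedBall xbar ρ, 0 < f x → f x < (r0 : EReal) →
      ∀ u ∈ subdiff f x, 1 ≤ φ' ((f x).toReal) * ‖u‖) :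
    ∀ x ∈ closedBall xbar ρ, 0 < f x → f x < (r0 : EReal) →
      Metric.infDist x (argminSet f) ≤ φ ((f x).toReal) := by
  classical
  obtain ⟨z, hzmin, hz0⟩ := hmin
  have hnonneg : ∀ y, 0 ≤ f y := fun y => hz0 ▸ hzmin y
  have hfxbar : f xbar = 0 := le_antisymm (hz0 ▸ hxbar z) (hnonneg xbar)
  -- φ is nonnegative on [0, r0)
  have hφnonneg : ∀ s ∈ Ico (0:ℝ) r0, 0 ≤ φ s := by
    intro s hs
    rcases eq_or_lt_of_le hs.1 with h | h
    · rw [← h, hφ0]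
    · have hslope := hφconc.le_slope_of_hasDerivAt ⟨le_refl (0:ℝ), hr0⟩ hs h
        (hφderiv s ⟨h, hs.2⟩)
      rw [slope_def_field, hφ0, sub_zero, sub_zero] at hslope
      have h2 : s * φ' s ≤ φ s := by
        rw [le_div_iff₀ h] at hslope; linarith [hslope]
      have h3 : 0 < φ' s := hφ'pos s ⟨h, hs.2⟩
      nlinarith [h2, h3, h]
  -- tangent line inequality for concave φ
  have htangent : ∀ a b : ℝ, a ∈ Ioo (0:ℝ) r0 → b ∈ Ico (0:ℝ) r0 → b ≤ a →
      φ b ≤ φ a + φ' a * (b - a) := by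
    intro a b ha hb hba
    rcases eq_or_lt_of_le hba with h | h
    · rw [h]; simp
    · have hslope := hφconc.le_slope_of_hasDerivAt hb ⟨ha.1.le, ha.2⟩ h (hφderiv a ha)
      rw [slope_def_field, le_div_iff₀ (by linarith : (0:ℝ) < a - b)] at hslope
      nlinarith [hslope]
  intro x hx hfx hfr0
  have hfxtop : f x ≠ ⊤ := ne_top_of_lt hfr0
  have hcoex : f x = (((f x).toReal : ℝ) : EReal) := (EReal.coe_toReal hfxtop (hbot x)).symm
  have hA0pos : 0 < (f x).toReal := by
    rw [hcoex] at hfx; exact_mod_cast hfx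
  have hA0lt : (f x).toReal < r0 := by
    rw [hcoex] at hfr0; exact_mod_cast hfr0
  have hφa0 : 0 ≤ φ ((f x).toReal) := hφnonneg _ ⟨hA0pos.le, hA0lt⟩
  -- main estimate, for every μ > 0
  have main : ∀ μ : ℝ, 0 < μ →
      Metric.infDist x (argminSet f) ≤ 2 * Real.sqrt ((f x).toReal / μ) + φ ((f x).toReal) := by
    intro μ hμ
    have hP := fun wpt : H => prox_exists f hbot hlsc hconv hnonneg z hz0 μ hμ wpt
    choose P hPtop hPsub using hP
    set seq : ℕ → H := fun k => P^[k] x with hseq_def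
    have hseqS : ∀ k, seq (k+1) = P (seq k) := fun k => Function.iterate_succ_apply' P k x
    have hfin : ∀ k, f (seq k) ≠ ⊤ := by
      intro k
      cases k with
      | zero => exact hfxtop
      | succ n => rw [hseqS n]; exact hPtop (seq n)
    set a : ℕ → ℝ := fun k => (f (seq k)).toReal with ha_def
    set d : ℕ → ℝ := fun k => ‖seq (k+1) - seq k‖ with hd_def
    have hd_nonneg : ∀ k, 0 ≤ d k := fun k => norm_nonneg _
    have hcoe : ∀ k, f (seq k) = ((a k : ℝ) : EReal) :=
      fun k => (EReal.coe_toReal (hfin k) (hbot _)).symm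
    have ha0eq : a 0 = (f x).toReal := rfl
    have hanneg : ∀ k, 0 ≤ a k := by
      intro k
      have h := hnonneg (seq k)
      rw [hcoe k] at h
      exact_mod_cast h
    have hsub : ∀ k (y : H),
        f (seq (k+1)) + ((⟪μ • (seq k - seq (k+1)), y - seq (k+1)⟫ : ℝ) : EReal) ≤ f y := by
      intro k y
      have h := hPsub (seq k) y
      rw [← hseqS k] at h
      exact h
    have hsubR : ∀ k (y : H), f y ≠ ⊤ →
        a (k+1) + μ * ⟪seq k - seq (k+1), y - seq (k+1)⟫ ≤ (f y).toReal := by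
      intro k y hy
      have h := hsub k y
      rw [hcoe (k+1), show f y = (((f y).toReal : ℝ) : EReal) from (EReal.coe_toReal hy (hbot y)).symm,
        ← EReal.coe_add, EReal.coe_le_coe_iff, real_inner_smul_left] at h
      exact h
    -- (1) descent
    have h1 : ∀ k, a (k+1) + μ * d k ^ 2 ≤ a k := by
      intro k
      have h := hsubR k (seq k) (hfin k)
      have hiden : ⟪seq k - seq (k+1), seq k - seq (k+1)⟫ = d k ^ 2 := by
        rw [real_inner_self_eq_norm_sq]
        have : d k = ‖seq k - seq (k+1)‖ := norm_sub_rev _ _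
        rw [this]
      rw [hiden] at h
      exact h
    -- Fejér monotonicity
    have hinner_nonpos : ∀ k, ⟪seq k - seq (k+1), xbar - seq (k+1)⟫ ≤ 0 := by
      intro k
      have h := hsubR k xbar (by simp [hfxbar])
      have hz' : (f xbar).toReal = 0 := by simp [hfxbar]
      rw [hz'] at h
      have h2 : μ * ⟪seq k - seq (k+1), xbar - seq (k+1)⟫ ≤ μ * 0 := by
        rw [mul_zero]; linarith [hanneg (k+1)]
      exact le_of_mul_le_mul_left h2 hμ
    have hexp : ∀ k, ‖seq k - xbar‖^2 = ‖seq k - seq (k+1)‖^2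
        + 2*⟪seq k - seq (k+1), seq (k+1) - xbar⟫ + ‖seq (k+1) - xbar‖^2 := by
      intro k
      have h : seq k - xbar = (seq k - seq (k+1)) + (seq (k+1) - xbar) := by abel
      rw [h, norm_add_sq_real]
    have hIflip : ∀ k, ⟪seq k - seq (k+1), seq (k+1) - xbar⟫
        = -⟪seq k - seq (k+1), xbar - seq (k+1)⟫ := by
      intro k
      rw [show seq (k+1) - xbar = -(xbar - seq (k+1)) by abel, inner_neg_right]
    have h3 : ∀ k, ‖seq (k+1) - xbar‖ ≤ ‖seq k - xbar‖ := by
      intro k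
      have hsq : ‖seq (k+1) - xbar‖^2 ≤ ‖seq k - xbar‖^2 := by
        have he := hexp k
        have hI := hinner_nonpos k
        have hIf := hIflip k
        nlinarith [sq_nonneg ‖seq k - seq (k+1)‖]
      have := Real.sqrt_le_sqrt hsq
      rwa [Real.sqrt_sq (norm_nonneg _), Real.sqrt_sq (norm_nonneg _)] at this
    have hball : ∀ k, seq k ∈ closedBall xbar ρ := by
      intro k
      have hmono : ∀ j, ‖seq j - xbar‖ ≤ ‖x - xbar‖ := by
        intro j
        induction j with
        | zero => exact le_refl _
        | succ n ih => exact (h3 n).trans ih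
      have hx' : ‖x - xbar‖ ≤ ρ := by
        rw [← dist_eq_norm]; exact mem_closedBall.mp hx
      exact mem_closedBall.mpr (by rw [dist_eq_norm]; exact (hmono k).trans hx')
    have hadec : ∀ k, a (k+1) ≤ a k := by
      intro k
      have := h1 k
      nlinarith [mul_nonneg hμ.le (sq_nonneg (d k))]
    have hale : ∀ k, a k ≤ (f x).toReal := by
      intro k
      induction k with
      | zero => exact le_of_eq ha0eq
      | succ n ih => exact (hadec n).trans ih
    have ha_lt_r0 : ∀ k, a k < r0 := fun k => lt_of_le_of_lt (hale k) hA0lt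
    -- (2) value recursion
    have h2sum : ∀ k, a (k+1) ≤ μ/2 * (‖seq k - xbar‖^2 - ‖seq (k+1) - xbar‖^2) := by
      intro k
      have h := hsubR k xbar (by simp [hfxbar])
      have hz' : (f xbar).toReal = 0 := by simp [hfxbar]
      rw [hz'] at h
      have he := hexp k
      have hIf := hIflip k
      have hgoal : μ/2 * (‖seq k - xbar‖^2 - ‖seq (k+1) - xbar‖^2)
          = μ/2 * ‖seq k - seq (k+1)‖^2 + μ * ⟪seq k - seq (k+1), seq (k+1) - xbar⟫ := by
        rw [he]; ring
      rw [hgoal, hIf]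
      have hn : 0 ≤ μ/2 * ‖seq k - seq (k+1)‖^2 := by positivity
      linarith only [h, hn]
    -- (4) KL inequality along the sequence
    have h4 : ∀ k, 0 < a (k+1) → 1 ≤ φ' (a (k+1)) * (μ * d k) := by
      intro k hak
      have hpos : 0 < f (seq (k+1)) := by
        rw [hcoe (k+1)]
        exact_mod_cast hak
      have hlt : f (seq (k+1)) < (r0 : EReal) := by
        rw [hcoe (k+1)]
        exact_mod_cast ha_lt_r0 (k+1)
      have hu : μ • (seq k - seq (k+1)) ∈ subdiff f (seq (k+1)) := fun y => hsub k y
      have hkl := hKL (seq (k+1)) (hball (k+1)) hpos hlt _ hu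
      rw [norm_smul, Real.norm_eq_abs, abs_of_pos hμ,
        show ‖seq k - seq (k+1)‖ = d k from norm_sub_rev _ _] at hkl
      have haeq : (f (seq (k+1))).toReal = a (k+1) := rfl
      rw [haeq] at hkl
      linarith [hkl]
    -- (5) the key chain recursion
    have h5 : ∀ k, d (k+1) ≤ (d k + (φ (a (k+1)) - φ (a (k+2)))) / 2 := by
      intro k
      rcases eq_or_lt_of_le (hanneg (k+1)) with h0 | h0
      · -- a (k+1) = 0
        have ha2 : a (k+2) = 0 := le_antisymm (by linarith [hadec (k+1)]) (hanneg (k+2))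
        have hd1 : d (k+1) = 0 := by
          have hh := h1 (k+1)
          have hsq : d (k+1)^2 ≤ 0 := by
            have h2' : μ * d (k+1)^2 ≤ 0 := by linarith [hh, ha2]
            nlinarith [hμ, sq_nonneg (d (k+1))]
          have : d (k+1)^2 = 0 := le_antisymm hsq (sq_nonneg _)
          exact pow_eq_zero_iff two_ne_zero |>.mp this
        rw [hd1, ← h0, ha2, sub_self]
        linarith [hd_nonneg k]
      · -- 0 < a (k+1)
        have hKLk := h4 k h0
        have hdk_pos : 0 < d k := by
          rcases lt_or_eq_of_le (hd_nonneg k) with h | h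
          · exact h
          · rw [← h, mul_zero, mul_zero] at hKLk; linarith
        have hφ'p : 0 < φ' (a (k+1)) := hφ'pos _ ⟨h0, ha_lt_r0 (k+1)⟩
        have htan := htangent (a (k+1)) (a (k+2)) ⟨h0, ha_lt_r0 (k+1)⟩
          ⟨hanneg (k+2), ha_lt_r0 (k+2)⟩ (hadec (k+1))
        have hdesc := h1 (k+1)
        have hΔ1 : φ' (a (k+1)) * (μ * d (k+1)^2) ≤ φ (a (k+1)) - φ (a (k+2)) := by
          have hineq : μ * d (k+1)^2 ≤ a (k+1) - a (k+2) := by linarith [hdesc]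
          have := mul_le_mul_of_nonneg_left hineq hφ'p.le
          nlinarith [htan, this]
        have hΔpos : 0 ≤ φ (a (k+1)) - φ (a (k+2)) :=
          le_trans (by positivity) hΔ1
        have hkey2 : d (k+1)^2 ≤ d k * (φ (a (k+1)) - φ (a (k+2))) := by
          have t1 : d k * (φ' (a (k+1)) * (μ * d (k+1)^2))
              ≤ d k * (φ (a (k+1)) - φ (a (k+2))) :=
            mul_le_mul_of_nonneg_left hΔ1 hdk_pos.le
          have t2 : 1 * d (k+1)^2 ≤ (φ' (a (k+1)) * (μ * d k)) * d (k+1)^2 :=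
            mul_le_mul_of_nonneg_right hKLk (sq_nonneg _)
          calc d (k+1)^2 = 1 * d (k+1)^2 := by ring
          _ ≤ (φ' (a (k+1)) * (μ * d k)) * d (k+1)^2 := t2
          _ = d k * (φ' (a (k+1)) * (μ * d (k+1)^2)) := by ring
          _ ≤ d k * (φ (a (k+1)) - φ (a (k+2))) := t1
        have hd1nn : 0 ≤ d (k+1) := hd_nonneg (k+1)
        nlinarith [hkey2, sq_nonneg (d k - (φ (a (k+1)) - φ (a (k+2)))), hd1nn, hΔpos, hdk_pos]
    -- nonnegativity and monotonicity of φ values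
    have hφa_nonneg : ∀ k, 0 ≤ φ (a k) := fun k => hφnonneg _ ⟨hanneg k, ha_lt_r0 k⟩
    have hφa1_le : φ (a 1) ≤ φ ((f x).toReal) := by
      have ht := htangent ((f x).toReal) (a 1) ⟨hA0pos, hA0lt⟩
        ⟨hanneg 1, ha_lt_r0 1⟩ (hale 1)
      have hm := mul_nonneg (hφ'pos ((f x).toReal) ⟨hA0pos, hA0lt⟩).le
        (sub_nonneg.mpr (hale 1))
      nlinarith [ht, hm]
    -- bound on partial sums of steps
    have hTbound : ∀ N, ∑ k ∈ Finset.range N, d k ≤ 2 * d 0 + φ ((f x).toReal) := by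
      intro N
      cases N with
      | zero => simp; linarith [hd_nonneg 0, hφa0]
      | succ n =>
        have hsum : ∑ k ∈ Finset.range (n+1), d k
            = (∑ k ∈ Finset.range n, d (k+1)) + d 0 := Finset.sum_range_succ' d n
        have htel : ∑ k ∈ Finset.range n, (φ (a (k+1)) - φ (a (k+2)))
            = φ (a 1) - φ (a (n+1)) :=
          Finset.sum_range_sub' (fun k => φ (a (k+1))) n
        have hsum2 : ∑ k ∈ Finset.range n, d (k+1)
            ≤ (∑ k ∈ Finset.range n, d k)/2 + (φ (a 1) - φ (a (n+1)))/2 := by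
          calc ∑ k ∈ Finset.range n, d (k+1)
              ≤ ∑ k ∈ Finset.range n, ((d k + (φ (a (k+1)) - φ (a (k+2))))/2) :=
                Finset.sum_le_sum (fun k _ => h5 k)
          _ = ∑ k ∈ Finset.range n, (d k/2 + (φ (a (k+1)) - φ (a (k+2)))/2) :=
                Finset.sum_congr rfl (fun k _ => by ring)
          _ = (∑ k ∈ Finset.range n, d k/2)
              + ∑ k ∈ Finset.range n, (φ (a (k+1)) - φ (a (k+2)))/2 :=
                Finset.sum_add_distrib
          _ = (∑ k ∈ Finset.range n, d k)/2
              + (∑ k ∈ Finset.range n, (φ (a (k+1)) - φ (a (k+2))))/2 := by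
                rw [← Finset.sum_div, ← Finset.sum_div]
          _ = (∑ k ∈ Finset.range n, d k)/2 + (φ (a 1) - φ (a (n+1)))/2 := by rw [htel]
        have hφan : 0 ≤ φ (a (n+1)) := hφa_nonneg _
        have hmono_sum : ∑ k ∈ Finset.range n, d k ≤ ∑ k ∈ Finset.range (n+1), d k :=
          Finset.sum_le_sum_of_subset_of_nonneg
            (Finset.range_subset_range.mpr (Nat.le_succ n)) (fun i _ _ => hd_nonneg i)
        linarith [hsum, hsum2, hφa1_le, hφan, hmono_sum]
    -- summability and convergence
    have hsummable : Summable d := summable_of_sum_range_le hd_nonneg hTbound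
    have hdist_eq : ∀ n, dist (seq n) (seq (n+1)) = d n := by
      intro n; rw [dist_eq_norm, norm_sub_rev]
    have hdfun : (fun n => dist (seq n) (seq (n+1))) = d := funext hdist_eq
    have hcauchy : CauchySeq seq := cauchySeq_of_summable_dist (hdfun ▸ hsummable)
    obtain ⟨xl, hxl⟩ := cauchySeq_tendsto_of_complete hcauchy
    have hdistle : dist x xl ≤ 2 * d 0 + φ ((f x).toReal) := by
      have h := dist_le_tsum_of_dist_le_of_tendsto₀ d (fun n => le_of_eq (hdist_eq n))
        hsummable hxl
      have htsum : tsum d ≤ 2 * d 0 + φ ((f x).toReal) :=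
        Real.tsum_le_of_sum_range_le hd_nonneg hTbound
      exact le_trans h htsum
    -- values tend to zero
    have hasum : ∀ N : ℕ, (N:ℝ) * a N ≤ μ/2 * ‖x - xbar‖^2 := by
      intro N
      have htel : ∑ k ∈ Finset.range N, a (k+1)
          ≤ μ/2 * (‖seq 0 - xbar‖^2 - ‖seq N - xbar‖^2) := by
        calc ∑ k ∈ Finset.range N, a (k+1)
            ≤ ∑ k ∈ Finset.range N, (μ/2 * (‖seq k - xbar‖^2 - ‖seq (k+1) - xbar‖^2)) :=
              Finset.sum_le_sum (fun k _ => h2sum k)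
        _ = μ/2 * ∑ k ∈ Finset.range N, (‖seq k - xbar‖^2 - ‖seq (k+1) - xbar‖^2) :=
              (Finset.mul_sum _ _ _).symm
        _ = μ/2 * (‖seq 0 - xbar‖^2 - ‖seq N - xbar‖^2) := by
              rw [Finset.sum_range_sub' (fun k => ‖seq k - xbar‖^2) N]
      have hanti : Antitone a := antitone_nat_of_succ_le hadec
      have haN : ∀ k ∈ Finset.range N, a N ≤ a (k+1) := by
        intro k hk
        exact hanti (Nat.succ_le_of_lt (Finset.mem_range.mp hk))
      have hcard := Finset.card_nsmul_le_sum (Finset.range N) (fun k => a (k+1)) (a N) haN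
      rw [Finset.card_range, nsmul_eq_mul] at hcard
      have hN2 : (0:ℝ) ≤ ‖seq N - xbar‖^2 := sq_nonneg _
      have hseq0x : seq 0 = x := rfl
      have hub : μ/2 * (‖seq 0 - xbar‖^2 - ‖seq N - xbar‖^2) ≤ μ/2 * ‖x - xbar‖^2 := by
        rw [hseq0x]
        have : ‖x - xbar‖^2 - ‖seq N - xbar‖^2 ≤ ‖x - xbar‖^2 := by linarith
        exact mul_le_mul_of_nonneg_left this (by positivity)
      linarith [hcard, htel, hub]
    have haz : Tendsto a atTop (𝓝 0) := by
      apply squeeze_zero' (Eventually.of_forall hanneg)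
        (g := fun N : ℕ => (μ/2 * ‖x - xbar‖^2) / N)
      · filter_upwards [eventually_ge_atTop 1] with N hN
        have hNpos : (0:ℝ) < N := by exact_mod_cast hN
        rw [le_div_iff₀ hNpos]
        calc a N * N = N * a N := by ring
        _ ≤ μ/2 * ‖x - xbar‖^2 := hasum N
      · exact tendsto_const_div_atTop_nhds_zero_nat _
    -- the limit is a minimizer
    have hfxl : f xl = 0 := by
      refine le_antisymm ?_ (hnonneg xl)
      by_contra hpos
      push_neg at hpos
      obtain ⟨b, hb1, hb2⟩ := EReal.exists_between_coe_real hpos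
      have hb1' : (0:ℝ) < b := by exact_mod_cast hb1
      have hev := hxl.eventually (hlsc xl (b:EReal) hb2)
      have hev2 := haz.eventually_lt_const hb1'
      obtain ⟨n, hn1, hn2⟩ := (hev.and hev2).exists
      rw [hcoe n] at hn1
      have : b < a n := by exact_mod_cast hn1
      linarith
    have hxlS : xl ∈ argminSet f := fun y => by rw [hfxl]; exact hnonneg y
    have hinf : Metric.infDist x (argminSet f) ≤ dist x xl :=
      Metric.infDist_le_dist_of_mem hxlS
    -- one-step length bound
    have hd0 : d 0 ≤ Real.sqrt ((f x).toReal / μ) := by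
      have hh := h1 0
      rw [ha0eq] at hh
      have hd0sq : d 0^2 ≤ (f x).toReal / μ := by
        rw [le_div_iff₀ hμ]
        nlinarith [hanneg 1, hh]
      calc d 0 = Real.sqrt (d 0^2) := (Real.sqrt_sq (hd_nonneg 0)).symm
      _ ≤ Real.sqrt ((f x).toReal / μ) := Real.sqrt_le_sqrt hd0sq
    calc Metric.infDist x (argminSet f) ≤ dist x xl := hinf
    _ ≤ 2 * d 0 + φ ((f x).toReal) := hdistle
    _ ≤ 2 * Real.sqrt ((f x).toReal / μ) + φ ((f x).toReal) := by linarith [hd0]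
  -- conclude by letting μ → ∞
  refine le_of_forall_pos_le_add fun ε hε => ?_
  have hμ : (0:ℝ) < 4 * (f x).toReal / ε^2 := by positivity
  have h := main _ hμ
  have hsq : Real.sqrt ((f x).toReal / (4 * (f x).toReal / ε^2)) = ε/2 := by
    rw [show (f x).toReal / (4 * (f x).toReal / ε^2) = (ε/2)^2 by field_simp; ring]
    exact Real.sqrt_sq (by positivity)
  rw [hsq] at h
  linarith [h]
end
end

section
/- Let r0 > 0, ρ > 0, c > 0, φ ∈ 𝒦(0,r0) and x̄ ∈ argmin f. Assume φ has moderate behavior near the origin, i.e. s·φ′(s) ≥ c·φ(s) for all s ∈ (0,r0). If φ(f(x)) ≥ dist(x, S) for every x ∈ B(x̄,ρ) with 0 < f(x) < r0, then φ′(f(x))·‖∂⁰f(x)‖ ≥ c for every x ∈ B(x̄,ρ) with 0 < f(x) < r0. (Theorem 3.2(ii): an error bound with moderate residual function implies the Kurdyka–Łojasiewicz inequality.) -/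
open Metric Set Filter
open scoped RealInnerProductSpace

noncomputable section

variable {H : Type*} [NormedAddCommGroup H] [InnerProductSpace ℝ H] [CompleteSpace H]

/-- **Theorem 3.2 (ii)**: for a proper lower-semicontinuous convex function with
`min f = 0`, an error bound `φ(f(x)) ≥ dist(x, argmin f)` on `B(x̄,ρ) ∩ [0 < f < r₀]`
with a residual function `φ` of moderate behavior (`s·φ'(s) ≥ c·φ(s)` on `(0,r₀)`)
implies the Kurdyka–Łojasiewicz inequality `φ'(f(x))·‖∂⁰f(x)‖ ≥ c` on the same set
(expressed equivalently as `φ'(f(x))·‖u‖ ≥ c` for every `u ∈ ∂f(x)`). -/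
theorem stmt1 (f : H → EReal)
    (hbot : ∀ x, f x ≠ ⊥) (htop : ∃ x, f x ≠ ⊤)
    (hlsc : LowerSemicontinuous f)
    (hconv : ∀ x y : H, ∀ t : ℝ, 0 < t → t < 1 →
      f (t • x + (1 - t) • y) ≤ (t : EReal) * f x + ((1 - t : ℝ) : EReal) * f y)
    (hmin : ∃ z, z ∈ argminSet f ∧ f z = 0)
    (r0 ρ c : ℝ) (hr0 : 0 < r0) (hρ : 0 < ρ) (hc : 0 < c)
    (φ φ' : ℝ → ℝ)
    (hφcont : ContinuousOn φ (Ico 0 r0))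
    (hφderiv : ∀ s ∈ Ioo (0 : ℝ) r0, HasDerivAt φ (φ' s) s)
    (hφ'cont : ContinuousOn φ' (Ioo 0 r0))
    (hφconc : ConcaveOn ℝ (Ico 0 r0) φ)
    (hφ0 : φ 0 = 0)
    (hφ'pos : ∀ s ∈ Ioo (0 : ℝ) r0, 0 < φ' s)
    (hmod : ∀ s ∈ Ioo (0 : ℝ) r0, c * φ s ≤ s * φ' s)
    (xbar : H) (hxbar : xbar ∈ argminSet f)
    (hEB : ∀ x ∈ closedBall xbar ρ, 0 < f x → f x < (r0 : EReal) →
      Metric.infDist x (argminSet f) ≤ φ ((f x).toReal)) :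
    ∀ x ∈ closedBall xbar ρ, 0 < f x → f x < (r0 : EReal) →
      ∀ u ∈ subdiff f x, c ≤ φ' ((f x).toReal) * ‖u‖ := by
  intro x hx hfx0 hfxr0 u hu
  obtain ⟨z₀, hz₀S, hz₀⟩ := hmin
  have hne_top : f x ≠ ⊤ := (hfxr0.trans (EReal.coe_lt_top r0)).ne
  set r : ℝ := (f x).toReal with hr
  have hfx : f x = (r : EReal) := (EReal.coe_toReal hne_top (hbot x)).symm
  have hr_pos : 0 < r := by
    have h := hfx0; rw [hfx] at h; exact_mod_cast h
  have hr_lt : r < r0 := by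
    have h := hfxr0; rw [hfx] at h; exact_mod_cast h
  have hrI : r ∈ Ioo (0 : ℝ) r0 := ⟨hr_pos, hr_lt⟩
  -- every minimizer has value 0
  have hval : ∀ z ∈ argminSet f, f z = 0 := by
    intro z hz
    refine le_antisymm ?_ ?_
    · rw [← hz₀]; exact hz z₀
    · rw [← hz₀]; exact hz₀S z
  -- key: for each z in argmin, r ≤ ‖u‖ * dist x z
  have key : ∀ z ∈ argminSet f, r ≤ ‖u‖ * dist x z := by
    intro z hz
    have h1 : f x + ((⟪u, z - x⟫ : ℝ) : EReal) ≤ f z := hu z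
    rw [hfx, hval z hz, ← EReal.coe_add] at h1
    have h2 : r + ⟪u, z - x⟫ ≤ 0 := by exact_mod_cast h1
    have h3 : ⟪u, z - x⟫ = -⟪u, x - z⟫ := by
      rw [← inner_neg_right]; congr 1; abel
    have h4 : ⟪u, x - z⟫ ≤ ‖u‖ * ‖x - z‖ := real_inner_le_norm u (x - z)
    rw [dist_eq_norm]
    nlinarith [h2, h4]
  have hu_pos : 0 < ‖u‖ := by
    rcases eq_or_lt_of_le (norm_nonneg u) with h | h
    · exfalso
      have := key z₀ hz₀S
      rw [← h, zero_mul] at this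
      linarith
    · exact h
  -- r / ‖u‖ ≤ infDist
  have h5 : r / ‖u‖ ≤ Metric.infDist x (argminSet f) := by
    by_contra hcon
    push_neg at hcon
    obtain ⟨y, hy, hdy⟩ := (Metric.infDist_lt_iff ⟨z₀, hz₀S⟩).mp hcon
    have hky := key y hy
    rw [lt_div_iff₀ hu_pos] at hdy
    nlinarith
  have h6 : Metric.infDist x (argminSet f) ≤ φ r := hEB x hx hfx0 hfxr0
  have h7 : c * φ r ≤ r * φ' r := hmod r hrI
  have h8 : r / ‖u‖ ≤ r * φ' r / c := by
    calc r / ‖u‖ ≤ φ r := h5.trans h6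
      _ ≤ r * φ' r / c := by rw [le_div_iff₀ hc]; linarith
  rw [div_le_div_iff₀ hu_pos hc] at h8
  have := hφ'pos r hrI
  nlinarith
end
end

section
/- Extrapolation of a Hölderian error bound to a global Hölder-type error bound: let γ > 0, p ≥ 1 and r0 > 0, and suppose f(x) ≥ γ·dist(x,S)^p for every x with f(x) ≤ r0. Then f(x) ≥ r0^{(p−1)/p}·γ^{1/p}·dist(x,S) for every x ∈ dom f with f(x) > r0; consequently, setting γ0 = γ^{1/p}·min{1, r0^{(p−1)/p}}, one has f(x) + f(x)^{1/p} ≥ γ0·dist(x,S) for all x ∈ dom f. -/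
open Metric Set Filter
open scoped RealInnerProductSpace

noncomputable section

variable {H : Type*} [NormedAddCommGroup H] [InnerProductSpace ℝ H] [CompleteSpace H]

/-- **Extrapolation of a Hölderian error bound to a global Hölder-type error
bound**: if `f` is proper lower-semicontinuous convex with `min f = 0` and
`f(x) ≥ γ·dist(x,S)^p` whenever `f(x) ≤ r₀`, then
`f(x) ≥ r₀^((p-1)/p)·γ^(1/p)·dist(x,S)` for every `x ∈ dom f` with `f(x) > r₀`,
and consequently, with `γ₀ = γ^(1/p)·min{1, r₀^((p-1)/p)}`,
`f(x) + f(x)^(1/p) ≥ γ₀·dist(x,S)` for all `x ∈ dom f`. -/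
theorem stmt3 (f : H → EReal)
    (hbot : ∀ x, f x ≠ ⊥) (htop : ∃ x, f x ≠ ⊤)
    (hlsc : LowerSemicontinuous f)
    (hconv : ∀ x y : H, ∀ t : ℝ, 0 < t → t < 1 →
      f (t • x + (1 - t) • y) ≤ (t : EReal) * f x + ((1 - t : ℝ) : EReal) * f y)
    (hmin : ∃ z, z ∈ argminSet f ∧ f z = 0)
    (γ p r0 : ℝ) (hγ : 0 < γ) (hp : 1 ≤ p) (hr0 : 0 < r0)
    (hEB : ∀ x, f x ≤ (r0 : EReal) →
      ((γ * Metric.infDist x (argminSet f) ^ p : ℝ) : EReal) ≤ f x) :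
    (∀ x, f x ≠ ⊤ → (r0 : EReal) < f x →
      r0 ^ ((p - 1) / p) * γ ^ (1 / p) * Metric.infDist x (argminSet f)
        ≤ (f x).toReal) ∧
    (∀ x, f x ≠ ⊤ →
      γ ^ (1 / p) * min 1 (r0 ^ ((p - 1) / p)) * Metric.infDist x (argminSet f)
        ≤ (f x).toReal + (f x).toReal ^ (1 / p)) := by
  obtain ⟨z0, hz0S, hz0⟩ := hmin
  have m0 : ∀ y, (0 : EReal) ≤ f y := fun y => hz0 ▸ hz0S y
  have hSz : ∀ z ∈ argminSet f, f z = 0 := fun z hz => le_antisymm (hz0 ▸ hz z0) (m0 z)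
  have hSne : (argminSet f).Nonempty := ⟨z0, hz0S⟩
  have hp0 : (0:ℝ) < p := lt_of_lt_of_le one_pos hp
  have part1 : ∀ x, f x ≠ ⊤ → (r0 : EReal) < f x →
      r0 ^ ((p - 1) / p) * γ ^ (1 / p) * Metric.infDist x (argminSet f)
        ≤ (f x).toReal := by
    intro x hxt hxr
    set D := Metric.infDist x (argminSet f) with hDdef
    have hD0 : 0 ≤ D := Metric.infDist_nonneg
    set R := (f x).toReal with hRdef
    have hfx : f x = (R : EReal) := (EReal.coe_toReal hxt (hbot x)).symm
    have hRr : r0 < R := by rw [hfx] at hxr; exact_mod_cast hxr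
    have hR0 : 0 < R := hr0.trans hRr
    set t := r0 / R with htdef
    have ht0 : 0 < t := div_pos hr0 hR0
    have ht1 : t < 1 := (div_lt_one hR0).mpr hRr
    have key : t * D ≤ (r0 / γ) ^ (1/p) := by
      apply le_of_forall_pos_le_add
      intro ε hε
      obtain ⟨z, hzS, hzd⟩ := (Metric.infDist_lt_iff hSne).mp
        (lt_add_of_pos_right D hε)
      have hfz : f z = 0 := hSz z hzS
      set y := t • x + (1 - t) • z with hy
      have hfy : f y ≤ (r0 : EReal) := by
        calc f y ≤ (t : EReal) * f x + ((1 - t : ℝ) : EReal) * f z :=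
              hconv x z t ht0 ht1
          _ = (r0 : EReal) := by
              rw [hfz, hfx, mul_zero, add_zero, ← EReal.coe_mul]
              norm_cast
              rw [htdef, div_mul_cancel₀ _ hR0.ne']
      have hEBy : γ * Metric.infDist y (argminSet f) ^ p ≤ r0 := by
        have h := (hEB y hfy).trans hfy
        exact_mod_cast h
      have hdy0 : 0 ≤ Metric.infDist y (argminSet f) := Metric.infDist_nonneg
      have hdy : Metric.infDist y (argminSet f) ≤ (r0/γ)^(1/p) := by
        have h1 : Metric.infDist y (argminSet f) ^ p ≤ r0 / γ := by
          rw [le_div_iff₀ hγ]; linarith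
        calc Metric.infDist y (argminSet f)
            = (Metric.infDist y (argminSet f) ^ p) ^ (1/p) := by
              rw [one_div, Real.rpow_rpow_inv hdy0 hp0.ne']
          _ ≤ (r0/γ)^(1/p) :=
              Real.rpow_le_rpow (Real.rpow_nonneg hdy0 p) h1 (by positivity)
      have hxy : dist x y = (1 - t) * dist x z := by
        have hxysub : x - y = (1 - t) • (x - z) := by rw [hy]; module
        rw [dist_eq_norm, hxysub, norm_smul, Real.norm_eq_abs,
          abs_of_nonneg (by linarith), ← dist_eq_norm]
      have htri : D ≤ Metric.infDist y (argminSet f) + dist x y :=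
        Metric.infDist_le_infDist_add_dist
      have h2 : (1 - t) * dist x z ≤ (1 - t) * (D + ε) :=
        mul_le_mul_of_nonneg_left hzd.le (by linarith)
      have h3 : (1 - t) * (D + ε) = D + ε - t * D - t * ε := by ring
      have h4 : 0 ≤ t * ε := mul_nonneg ht0.le hε.le
      linarith
    -- now conclude
    have hkey2 : r0 * D ≤ (r0/γ)^(1/p) * R := by
      have := mul_le_mul_of_nonneg_right key hR0.le
      calc r0 * D = t * D * R := by rw [htdef]; field_simp
        _ ≤ (r0/γ)^(1/p) * R := this
    set c := r0 ^ ((p - 1) / p) * γ ^ (1 / p) with hcdef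
    have hc0 : 0 ≤ c := by positivity
    have hc : (r0/γ)^(1/p) * c = r0 := by
      rw [hcdef, Real.div_rpow hr0.le hγ.le]
      have hpp : 1/p + (p-1)/p = 1 := by field_simp; ring
      have : r0 ^ (1/p) * r0 ^ ((p-1)/p) = r0 := by
        rw [← Real.rpow_add hr0, hpp, Real.rpow_one]
      calc r0 ^ (1/p) / γ ^ (1/p) * (r0 ^ ((p-1)/p) * γ ^ (1/p))
          = (r0 ^ (1/p) * r0 ^ ((p-1)/p)) * (γ ^ (1/p) / γ ^ (1/p)) := by ring
        _ = r0 := by rw [this, div_self (by positivity), mul_one]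
    have h5 : c * (r0 * D) ≤ c * ((r0/γ)^(1/p) * R) :=
      mul_le_mul_of_nonneg_left hkey2 hc0
    have h6 : c * ((r0/γ)^(1/p) * R) = r0 * R := by rw [← mul_assoc, mul_comm c, hc]
    have h7 : r0 * (c * D) ≤ r0 * R := by nlinarith
    exact le_of_mul_le_mul_left h7 hr0
  refine ⟨part1, fun x hxt => ?_⟩
  set D := Metric.infDist x (argminSet f) with hDdef
  have hD0 : 0 ≤ D := Metric.infDist_nonneg
  set R := (f x).toReal with hRdef
  have hfx : f x = (R : EReal) := (EReal.coe_toReal hxt (hbot x)).symm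
  have hR0 : 0 ≤ R := by
    have h0 := m0 x; rw [hfx] at h0; exact_mod_cast h0
  have hg0 : (0:ℝ) ≤ γ ^ (1/p) := Real.rpow_nonneg hγ.le _
  by_cases h : f x ≤ (r0 : EReal)
  · have hEBx : γ * D ^ p ≤ R := by
      have := hEB x h
      rw [hfx] at this
      exact_mod_cast this
    have h1 : γ ^ (1/p) * D ≤ R ^ (1/p) := by
      calc γ ^ (1/p) * D = (γ * D ^ p) ^ (1/p) := by
            rw [Real.mul_rpow hγ.le (Real.rpow_nonneg hD0 p), one_div,
              Real.rpow_rpow_inv hD0 hp0.ne']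
        _ ≤ R ^ (1/p) := Real.rpow_le_rpow (by positivity) hEBx (by positivity)
    have h2 : γ ^ (1/p) * min 1 (r0 ^ ((p-1)/p)) * D ≤ γ ^ (1/p) * D := by
      have hm : min 1 (r0 ^ ((p-1)/p)) ≤ 1 := min_le_left _ _
      have := mul_le_mul_of_nonneg_right (mul_le_mul_of_nonneg_left hm hg0) hD0
      simpa using this
    linarith
  · push_neg at h
    have hP := part1 x hxt h
    have hm : min 1 (r0 ^ ((p-1)/p)) ≤ r0 ^ ((p-1)/p) := min_le_right _ _
    have h2 : γ ^ (1/p) * min 1 (r0 ^ ((p-1)/p)) * D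
        ≤ r0 ^ ((p-1)/p) * γ ^ (1/p) * D := by
      have := mul_le_mul_of_nonneg_right (mul_le_mul_of_nonneg_left hm hg0) hD0
      nlinarith
    have h3 : (0:ℝ) ≤ R ^ (1/p) := Real.rpow_nonneg hR0 _
    linarith
end
end

section
/- Regularity of an intersection of convex sets with nonempty-interior intersection: let m ≥ 2 and let C₁, …, C_m be closed convex subsets of H. Suppose there exist x̄ ∈ H and R > 0 such that the closed ball B(x̄, R) is contained in ⋂_{i=1}^m C_i. Then for every x ∈ H, dist(x, ⋂_{i=1}^m C_i) ≤ (1 + 2‖x − x̄‖/R)^{m−1} · max{dist(x, C_i) : i = 1, …, m}. (Proposition 3.9.) -/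
open Metric Set Filter

noncomputable section

lemma key_two {H : Type*} [NormedAddCommGroup H] [InnerProductSpace ℝ H]
    [CompleteSpace H]
    (C D : Set H) (hCc : IsClosed C) (hCv : Convex ℝ C)
    (hDc : IsClosed D) (hDv : Convex ℝ D)
    (xbar : H) (R : ℝ) (hR : 0 < R)
    (hCb : closedBall xbar R ⊆ C) (hDb : closedBall xbar R ⊆ D) (x : H) :
    Metric.infDist x (C ∩ D) ≤ Metric.infDist x D +
      (Metric.infDist x C + Metric.infDist x D) * (‖x - xbar‖ / R) := by
  have hxbarC : xbar ∈ C := hCb (mem_closedBall_self hR.le)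
  have hxbarD : xbar ∈ D := hDb (mem_closedBall_self hR.le)
  have hCne : C.Nonempty := ⟨xbar, hxbarC⟩
  have hDne : D.Nonempty := ⟨xbar, hxbarD⟩
  obtain ⟨p, hpD, hp⟩ := exists_norm_eq_iInf_of_complete_convex hDne hDc.isComplete hDv x
  have hpdist : ‖x - p‖ = Metric.infDist x D := by
    rw [Metric.infDist_eq_iInf, hp]
    congr 1; ext w; rw [dist_eq_norm]
  have hvar := (norm_eq_iInf_iff_real_inner_le_zero hDv hpD).mp hp
  have hinner : inner ℝ (x - p) (xbar - p) ≤ (0:ℝ) := hvar xbar hxbarD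
  have hinner' : (0:ℝ) ≤ inner ℝ (x - p) (p - xbar) := by
    rw [show xbar - p = -(p - xbar) by abel, inner_neg_right] at hinner
    linarith
  have hpx : ‖p - xbar‖ ≤ ‖x - xbar‖ := by
    have h1 : ‖(x - p) + (p - xbar)‖^2
        = ‖x - p‖^2 + 2 * inner ℝ (x - p) (p - xbar) + ‖p - xbar‖^2 :=
      norm_add_sq_real _ _
    have h2 : x - xbar = (x - p) + (p - xbar) := by abel
    refine le_of_pow_le_pow_left₀ (n := 2) (by norm_num) (norm_nonneg _) ?_
    rw [h2, h1]
    nlinarith [sq_nonneg ‖x - p‖]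
  set dC := Metric.infDist x C with hdC
  set dD := Metric.infDist x D with hdD
  have hdC0 : 0 ≤ dC := Metric.infDist_nonneg
  have hdD0 : 0 ≤ dD := Metric.infDist_nonneg
  set K := ‖x - xbar‖ / R with hKdef
  have hK0 : 0 ≤ K := div_nonneg (norm_nonneg _) hR.le
  refine le_of_forall_pos_le_add fun ε hε => ?_
  set δ := ε / (K + 1) with hδdef
  have hδ : 0 < δ := div_pos hε (by linarith)
  have hδK : δ * K ≤ ε := by
    have : δ * (K + 1) = ε := by
      rw [hδdef, div_mul_cancel₀ _ (by linarith : K + 1 ≠ 0)]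
    nlinarith
  obtain ⟨c, hcC, hct⟩ := (Metric.infDist_lt_iff hCne).mp
    (show Metric.infDist p C < Metric.infDist p C + δ by linarith)
  rw [dist_eq_norm] at hct
  set t := ‖p - c‖ with htdef
  have hpC : Metric.infDist p C ≤ dC + dD := by
    have h := Metric.infDist_le_infDist_add_dist (x := p) (y := x) (s := C)
    rw [dist_eq_norm, norm_sub_rev] at h
    rw [hpdist] at h
    linarith
  have htlt : t < dC + dD + δ := by linarith
  by_cases hpmem : p ∈ C
  · have h : Metric.infDist x (C ∩ D) ≤ dist x p :=
      Metric.infDist_le_dist_of_mem ⟨hpmem, hpD⟩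
    rw [dist_eq_norm, hpdist] at h
    nlinarith [mul_nonneg (add_nonneg hdC0 hdD0) hK0]
  · have ht0 : 0 < t := by
      rcases (norm_nonneg (p - c)).lt_or_eq with h | h
      · exact h
      · exfalso; apply hpmem
        have : p = c := by
          have := sub_eq_zero.mp (norm_eq_zero.mp h.symm)
          exact this
        rw [this]; exact hcC
    set lam := t / (t + R) with hlamdef
    have htR : 0 < t + R := by linarith
    have hlam0 : 0 ≤ lam := div_nonneg ht0.le htR.le
    have hlam1 : lam ≤ 1 := by
      rw [div_le_one htR]; linarith
    set w := xbar + (R / t) • (p - c) with hwdef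
    have hwball : w ∈ closedBall xbar R := by
      rw [mem_closedBall, dist_eq_norm]
      have : w - xbar = (R / t) • (p - c) := by rw [hwdef]; abel
      rw [this, norm_smul, Real.norm_eq_abs, abs_of_pos (div_pos hR ht0), ← htdef]
      rw [div_mul_cancel₀ _ (ne_of_gt ht0)]
    have hwC : w ∈ C := hCb hwball
    set y := (1 - lam) • p + lam • xbar with hydef
    have hyD : y ∈ D := hDv hpD hxbarD (by linarith) hlam0 (by ring)
    have hyC : y ∈ C := by
      have hmem := hCv hcC hwC (a := 1 - lam) (b := lam) (by linarith) hlam0 (by ring)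
      have heq : (1 - lam) • c + lam • w = y := by
        rw [hwdef, hydef, hlamdef]
        match_scalars <;> field_simp <;> ring
      rwa [heq] at hmem
    have hle : Metric.infDist x (C ∩ D) ≤ dist x y :=
      Metric.infDist_le_dist_of_mem ⟨hyC, hyD⟩
    have hpy : dist p y = lam * ‖p - xbar‖ := by
      rw [dist_eq_norm]
      have : p - y = lam • (p - xbar) := by
        rw [hydef]; match_scalars <;> ring
      rw [this, norm_smul, Real.norm_eq_abs, abs_of_nonneg hlam0]
    have htri : dist x y ≤ ‖x - p‖ + lam * ‖p - xbar‖ := by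
      calc dist x y ≤ dist x p + dist p y := dist_triangle _ _ _
      _ = ‖x - p‖ + lam * ‖p - xbar‖ := by rw [dist_eq_norm, hpy]
    have hlamt : lam ≤ t / R := by
      rw [hlamdef, div_le_div_iff₀ htR hR]
      nlinarith
    have hbound : lam * ‖p - xbar‖ ≤ t * K := by
      have h1 : lam * ‖p - xbar‖ ≤ (t / R) * ‖x - xbar‖ :=
        mul_le_mul hlamt hpx (norm_nonneg _) (div_nonneg ht0.le hR.le)
      have h2 : (t / R) * ‖x - xbar‖ = t * K := by rw [hKdef]; ring
      linarith
    have htK : t * K ≤ (dC + dD) * K + δ * K := by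
      have := mul_le_mul_of_nonneg_right htlt.le hK0
      nlinarith
    rw [hpdist] at htri
    linarith

/-- **Proposition 3.9** (regularity of an intersection of convex sets with
nonempty-interior intersection): if `C₁, …, C_m` (`m ≥ 2`) are closed convex
subsets of a real Hilbert space `H` and the closed ball `B(x̄,R)` is contained
in their intersection, then for every `x ∈ H`,
`dist(x, ⋂ᵢ Cᵢ) ≤ (1 + 2‖x − x̄‖/R)^(m−1) · maxᵢ dist(x, Cᵢ)`. -/
theorem stmt5 {H : Type*} [NormedAddCommGroup H] [InnerProductSpace ℝ H]
    [CompleteSpace H]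
    (m : ℕ) (hm : 2 ≤ m) (C : Fin m → Set H)
    (hclosed : ∀ i, IsClosed (C i)) (hconv : ∀ i, Convex ℝ (C i))
    (xbar : H) (R : ℝ) (hR : 0 < R)
    (hball : closedBall xbar R ⊆ ⋂ i, C i) :
    ∀ x : H, Metric.infDist x (⋂ i, C i) ≤
      (1 + 2 * ‖x - xbar‖ / R) ^ (m - 1) * ⨆ i, Metric.infDist x (C i) := by
  intro x
  have hballi : ∀ i, closedBall xbar R ⊆ C i := fun i =>
    hball.trans (Set.iInter_subset _ i)
  set ρ := 1 + 2 * ‖x - xbar‖ / R with hρdef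
  clear_value ρ
  have hρ1 : 1 ≤ ρ := by
    have : 0 ≤ 2 * ‖x - xbar‖ / R := by positivity
    linarith
  set M := ⨆ i, Metric.infDist x (C i) with hMdef
  clear_value M
  have hbdd : BddAbove (Set.range fun i => Metric.infDist x (C i)) :=
    (Set.finite_range _).bddAbove
  have hle : ∀ i, Metric.infDist x (C i) ≤ M := fun i => hMdef ▸ le_ciSup hbdd i
  have hM0 : 0 ≤ M :=
    le_trans Metric.infDist_nonneg (hle ⟨0, by omega⟩)
  -- partial intersections
  set E : ℕ → Set H := fun k => ⋂ i : Fin m, ⋂ (_ : (i : ℕ) < k), C i with hEdef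
  clear_value E
  have hEclosed : ∀ k, IsClosed (E k) := fun k => by
    rw [hEdef]; exact isClosed_iInter fun i => isClosed_iInter fun _ => hclosed i
  have hEconv : ∀ k, Convex ℝ (E k) := fun k => by
    rw [hEdef]; exact convex_iInter fun i => convex_iInter fun _ => hconv i
  have hEball : ∀ k, closedBall xbar R ⊆ E k := fun k => by
    rw [hEdef]; exact Set.subset_iInter fun i => Set.subset_iInter fun _ => hballi i
  have hEm : E m = ⋂ i, C i := by
    ext z; simp [hEdef, Fin.is_lt]
  have hstep : ∀ k (hk : k < m), E (k + 1) = E k ∩ C ⟨k, hk⟩ := by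
    intro k hk
    ext z
    simp only [hEdef, Set.mem_iInter, Set.mem_inter_iff]
    constructor
    · intro h
      exact ⟨fun i hi => h i (Nat.lt_succ_of_lt hi),
        h ⟨k, hk⟩ (Nat.lt_succ_self k)⟩
    · rintro ⟨h1, h2⟩ i hi
      rcases Nat.lt_succ_iff_lt_or_eq.mp hi with h | h
      · exact h1 i h
      · have : i = ⟨k, hk⟩ := Fin.ext h
        rw [this]; exact h2
  have hE1 : E 1 = C ⟨0, by omega⟩ := by
    ext z
    simp only [hEdef, Set.mem_iInter]
    constructor
    · intro h; exact h ⟨0, by omega⟩ (by norm_num)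
    · intro h i hi
      have : i = ⟨0, by omega⟩ := Fin.ext (show (i : ℕ) = 0 by omega)
      rw [this]; exact h
  have hKey : ∀ k, Metric.infDist x (E (k + 1)) ≤ ρ ^ k * M := by
    intro k
    induction k with
    | zero =>
      rw [hE1]
      simpa using hle ⟨0, by omega⟩
    | succ k ih =>
      by_cases hk : k + 1 < m
      · rw [hstep (k + 1) hk]
        have h := key_two (E (k + 1)) (C ⟨k + 1, hk⟩) (hEclosed _) (hEconv _)
          (hclosed _) (hconv _) xbar R hR (hEball _) (hballi _) x
        have h1 : Metric.infDist x (C ⟨k + 1, hk⟩) ≤ M := hle _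
        have h2 : M ≤ ρ ^ k * M := by
          nlinarith [one_le_pow₀ hρ1 (n := k)]
        have h3 : 0 ≤ ‖x - xbar‖ / R := by positivity
        have hpow : ρ ^ (k + 1) = ρ ^ k * ρ := pow_succ ρ k
        have hρeq : ρ = 1 + 2 * (‖x - xbar‖ / R) := by rw [hρdef]; ring
        nlinarith [mul_le_mul_of_nonneg_right
          (add_le_add (ih.trans (le_refl _)) (h1.trans h2)) h3,
          Metric.infDist_nonneg (x := x) (s := E (k + 1))]
      · have hEeq : E (k + 2) = E (k + 1) := by
          ext z
          simp only [hEdef, Set.mem_iInter]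
          constructor
          · intro h i hi; exact h i (Nat.lt_succ_of_lt hi)
          · intro h i hi
            exact h i (by omega)
        rw [hEeq]
        have h4 : ρ ^ k ≤ ρ ^ (k + 1) := pow_le_pow_right₀ hρ1 (by omega)
        nlinarith
  have hfin := hKey (m - 1)
  have hm2 : m - 1 + 1 = m := by omega
  rw [hm2, hEm] at hfin
  exact hfin
end
end

section
/- Error bound for the barycentric feasibility potential: let m ≥ 2, let C₁, …, C_m be closed convex subsets of H with B(x̄, R) ⊆ C := ⋂_{i=1}^m C_i for some x̄ ∈ H, R > 0, let α₁, …, α_m > 0 with Σᵢ αᵢ = 1, and set f(x) = ½ Σ_{i=1}^m αᵢ·dist(x, C_i)². Then for every ρ ≥ 0 and every x ∈ H with ‖x − x̄‖ ≤ ρ, dist(x, C) ≤ (1 + 2ρ/R)^{m−1} · (2/min_{i} αᵢ)^{1/2} · √(f(x)). Consequently f satisfies the Łojasiewicz inequality on B(x̄, ρ) ∩ {f > 0} with desingularizing function φ(s) = √(2s/M), where M = ¼ (1 + 2ρ/R)^{2−2m} min_i αᵢ: namely φ′(f(x))·‖∇f(x)‖ ≥ 1 there. -/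
open Metric Set Filter

noncomputable section

open RealInnerProductSpace

private lemma proj_exists' {H : Type*} [NormedAddCommGroup H] [InnerProductSpace ℝ H]
    [CompleteSpace H] (K : Set H) (hcl : IsClosed K) (hcv : Convex ℝ K)
    (hne : K.Nonempty) (x : H) :
    ∃ p ∈ K, ‖x - p‖ = infDist x K ∧ ∀ w ∈ K, ⟪x - p, w - p⟫ ≤ 0 := by
  obtain ⟨p, hpK, hp⟩ := exists_norm_eq_iInf_of_complete_convex hne hcl.isComplete hcv x
  have hinf : (⨅ w : K, ‖x - w‖) = infDist x K := by
    rw [infDist_eq_iInf]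
    simp only [dist_eq_norm]
  exact ⟨p, hpK, by rw [hp, hinf],
    (norm_eq_iInf_iff_real_inner_le_zero hcv hpK).1 hp⟩

private lemma key' {H : Type*} [NormedAddCommGroup H] [InnerProductSpace ℝ H]
    [CompleteSpace H] (A B : Set H) (hAcl : IsClosed A) (hAcv : Convex ℝ A)
    (hBcl : IsClosed B) (hBcv : Convex ℝ B)
    (xbar x : H) (R ρ : ℝ) (hR : 0 < R) (hx : ‖x - xbar‖ ≤ ρ)
    (hxbarB : xbar ∈ B) (hball : closedBall xbar R ⊆ A) :
    infDist x (A ∩ B) ≤ infDist x B + (infDist x A + infDist x B) * (ρ / R) := by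
  have hxbarA : xbar ∈ A := hball (mem_closedBall_self hR.le)
  have hρ : 0 ≤ ρ := le_trans (norm_nonneg _) hx
  obtain ⟨a, haA, han, -⟩ := proj_exists' A hAcl hAcv ⟨xbar, hxbarA⟩ x
  obtain ⟨b, hbB, hbn, hbvar⟩ := proj_exists' B hBcl hBcv ⟨xbar, hxbarB⟩ x
  have hbxbar : ‖b - xbar‖ ≤ ρ := by
    have h1 : ⟪x - b, xbar - b⟫ ≤ 0 := hbvar xbar hxbarB
    have h2 : ‖x - xbar‖ ^ 2 = ‖x - b‖ ^ 2 - 2 * ⟪x - b, xbar - b⟫ + ‖xbar - b‖ ^ 2 := by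
      have h := norm_sub_sq_real (x - b) (xbar - b)
      have h3 : (x - b) - (xbar - b) = x - xbar := by abel
      rw [h3] at h
      linarith
    have h4 : ‖xbar - b‖ ^ 2 ≤ ρ ^ 2 := by nlinarith [norm_nonneg (x - b), norm_nonneg (x - xbar)]
    have h5 : ‖xbar - b‖ ≤ ρ := by nlinarith [norm_nonneg (xbar - b)]
    rwa [norm_sub_rev]
  set δ := ‖b - a‖ with hδdef
  have hδnn : 0 ≤ δ := norm_nonneg _
  have hδle : δ ≤ infDist x A + infDist x B := by
    have h1 : b - a = (b - x) + (x - a) := by abel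
    calc δ = ‖(b - x) + (x - a)‖ := by rw [hδdef, h1]
      _ ≤ ‖b - x‖ + ‖x - a‖ := norm_add_le _ _
      _ = infDist x A + infDist x B := by rw [norm_sub_rev, han, hbn]; ring
  rcases eq_or_lt_of_le hδnn with h0 | hpos
  · have hba : b = a := by
      have h := h0.symm
      rw [hδdef] at h
      exact sub_eq_zero.mp (norm_eq_zero.mp h)
    have hbAB : b ∈ A ∩ B := ⟨hba ▸ haA, hbB⟩
    have h1 : infDist x (A ∩ B) ≤ infDist x B := by
      calc infDist x (A ∩ B) ≤ dist x b := infDist_le_dist_of_mem hbAB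
        _ = infDist x B := by rw [dist_eq_norm, hbn]
    have h2 : 0 ≤ (infDist x A + infDist x B) * (ρ / R) :=
      mul_nonneg (add_nonneg infDist_nonneg infDist_nonneg) (div_nonneg hρ hR.le)
    linarith
  · set t := δ / (δ + R) with htdef
    have hδR : 0 < δ + R := by linarith
    have ht0 : 0 ≤ t := div_nonneg hδnn hδR.le
    have ht1 : t ≤ 1 := by rw [htdef, div_le_one hδR]; linarith
    set y := xbar + (R / δ) • (b - a) with hydef
    have hyA : y ∈ A := by
      apply hball
      have h1 : y - xbar = (R / δ) • (b - a) := by rw [hydef]; abel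
      rw [mem_closedBall, dist_eq_norm, h1, norm_smul, Real.norm_eq_abs,
        abs_of_nonneg (div_nonneg hR.le hδnn), ← hδdef, div_mul_cancel₀ _ hpos.ne']
    set z := (1 - t) • b + t • xbar with hzdef
    have hzB : z ∈ B := hBcv hbB hxbarB (by linarith) ht0 (by ring)
    have hzA : z ∈ A := by
      have h2 : t * (R / δ) = 1 - t := by
        rw [htdef]; field_simp; ring
      have hyz : z = (1 - t) • a + t • y := by
        rw [hzdef, hydef, smul_add, smul_smul, h2]
        module
      rw [hyz]
      exact hAcv haA hyA (by linarith) ht0 (by ring)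
    have hbz : b - z = t • (b - xbar) := by
      rw [hzdef]; module
    have htle : t ≤ δ / R := by
      rw [htdef, div_le_div_iff₀ hδR hR]
      nlinarith
    calc infDist x (A ∩ B) ≤ dist x z := infDist_le_dist_of_mem ⟨hzA, hzB⟩
      _ = ‖x - z‖ := dist_eq_norm _ _
      _ ≤ ‖x - b‖ + ‖b - z‖ := by
          rw [show x - z = (x - b) + (b - z) from by abel]
          exact norm_add_le _ _
      _ = infDist x B + t * ‖b - xbar‖ := by
          rw [hbn, hbz, norm_smul, Real.norm_eq_abs, abs_of_nonneg ht0]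
      _ ≤ infDist x B + (infDist x A + infDist x B) * (ρ / R) := by
          have h1 : t * ‖b - xbar‖ ≤ (δ / R) * ρ :=
            mul_le_mul htle hbxbar (norm_nonneg _) (div_nonneg hδnn hR.le)
          have h2 : (δ / R) * ρ ≤ (infDist x A + infDist x B) * (ρ / R) := by
            rw [show (δ / R) * ρ = δ * (ρ / R) from by ring]
            exact mul_le_mul_of_nonneg_right hδle (div_nonneg hρ hR.le)
          linarith

private lemma chain' {H : Type*} [NormedAddCommGroup H] [InnerProductSpace ℝ H]
    [CompleteSpace H] (m : ℕ) (C : Fin m → Set H)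
    (hclosed : ∀ i, IsClosed (C i)) (hconv : ∀ i, Convex ℝ (C i))
    (xbar : H) (R : ℝ) (hR : 0 < R)
    (hball : closedBall xbar R ⊆ ⋂ i, C i)
    (x : H) (ρ : ℝ) (hx : ‖x - xbar‖ ≤ ρ)
    (d : ℝ) (hd0 : 0 ≤ d) (hd : ∀ i, infDist x (C i) ≤ d) :
    ∀ k, 1 ≤ k → k ≤ m →
      infDist x (⋂ i : Fin m, ⋂ (_ : (i : ℕ) < k), C i) ≤ (1 + 2 * ρ / R) ^ (k - 1) * d := by
  have hρ : 0 ≤ ρ := le_trans (norm_nonneg _) hx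
  have hK1 : 1 ≤ 1 + 2 * ρ / R := by
    have : 0 ≤ 2 * ρ / R := div_nonneg (by linarith) hR.le
    linarith
  have hxbarC : ∀ i, xbar ∈ C i := fun i =>
    mem_iInter.1 (hball (mem_closedBall_self hR.le)) i
  intro k hk1
  induction k, hk1 using Nat.le_induction with
  | base =>
    intro hm1
    have h0 : (0 : ℕ) < m := by omega
    have hset : (⋂ i : Fin m, ⋂ (_ : (i : ℕ) < 1), C i) = C ⟨0, h0⟩ := by
      ext w
      simp only [mem_iInter]
      constructor
      · intro h; exact h ⟨0, h0⟩ (by simp)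
      · intro h i hi
        have : i = ⟨0, h0⟩ := by
          apply Fin.ext; simpa using hi
        rwa [this]
    rw [hset]
    simpa using hd ⟨0, h0⟩
  | succ k hk ih =>
    intro hkm
    have hklt : k < m := by omega
    have hsplit : (⋂ i : Fin m, ⋂ (_ : (i : ℕ) < k + 1), C i)
        = C ⟨k, hklt⟩ ∩ ⋂ i : Fin m, ⋂ (_ : (i : ℕ) < k), C i := by
      ext w
      simp only [mem_iInter, mem_inter_iff]
      constructor
      · intro h
        exact ⟨h ⟨k, hklt⟩ (by simp), fun i hi => h i (by omega)⟩
      · rintro ⟨h1, h2⟩ i hi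
        rcases lt_or_eq_of_le (Nat.lt_succ_iff.mp hi) with h | h
        · exact h2 i h
        · have : i = ⟨k, hklt⟩ := Fin.ext h
          rwa [this]
    set T := ⋂ i : Fin m, ⋂ (_ : (i : ℕ) < k), C i with hTdef
    have hTcl : IsClosed T := isClosed_iInter fun i => isClosed_iInter fun _ => hclosed i
    have hTcv : Convex ℝ T := convex_iInter fun i => convex_iInter fun _ => hconv i
    have hxbarT : xbar ∈ T := mem_iInter.2 fun i => mem_iInter.2 fun _ => hxbarC i
    have hballk : closedBall xbar R ⊆ C ⟨k, hklt⟩ :=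
      subset_trans hball (iInter_subset _ _)
    have hkey := key' (C ⟨k, hklt⟩) T (hclosed _) (hconv _) hTcl hTcv xbar x R ρ hR hx
      hxbarT hballk
    have hT := ih (by omega)
    have hA := hd ⟨k, hklt⟩
    rw [hsplit]
    have hpow : (1 + 2 * ρ / R) ^ (k + 1 - 1) = (1 + 2 * ρ / R) ^ (k - 1) * (1 + 2 * ρ / R) := by
      rw [← pow_succ]
      congr 1
      omega
    rw [hpow]
    set e := (1 + 2 * ρ / R) ^ (k - 1) with hedef
    have he1 : 1 ≤ e := one_le_pow₀ hK1
    have hdA : infDist x (C ⟨k, hklt⟩) ≤ e * d := le_trans hA (le_mul_of_one_le_left hd0 he1)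
    have hρR : 0 ≤ ρ / R := div_nonneg hρ hR.le
    have hmul : (infDist x (C ⟨k, hklt⟩) + infDist x T) * (ρ / R) ≤ (e * d + e * d) * (ρ / R) :=
      mul_le_mul_of_nonneg_right (by linarith) hρR
    have hgoal : e * (1 + 2 * ρ / R) * d = e * d + (e * d + e * d) * (ρ / R) := by
      ring
    linarith [hkey]

/-- **Error bound for the barycentric feasibility potential**: with
`C₁,…,C_m` closed convex, `B(x̄,R) ⊆ C = ⋂ᵢ Cᵢ`, weights `αᵢ > 0` summing to 1
and `f(x) = ½ Σᵢ αᵢ dist(x,Cᵢ)²`, for every `ρ ≥ 0` and every `x` with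
`‖x − x̄‖ ≤ ρ` one has
`dist(x,C) ≤ (1 + 2ρ/R)^(m−1) · (2/minᵢ αᵢ)^{1/2} · √(f(x))`;
consequently `f` satisfies the Łojasiewicz inequality on `B(x̄,ρ) ∩ {f > 0}`
with desingularizing function `φ(s) = √(2s/M)`, `M = ¼(1+2ρ/R)^{2−2m} minᵢ αᵢ`:
`φ'(f(x))·‖∇f(x)‖ = (√(2·M·f(x)))⁻¹·‖Σᵢ αᵢ (x − P_{Cᵢ} x)‖ ≥ 1` there, where
`P_{Cᵢ}` is the metric projection onto `Cᵢ`. -/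
theorem stmt6 {H : Type*} [NormedAddCommGroup H] [InnerProductSpace ℝ H]
    [CompleteSpace H]
    (m : ℕ) (hm : 2 ≤ m) (C : Fin m → Set H)
    (hclosed : ∀ i, IsClosed (C i)) (hconv : ∀ i, Convex ℝ (C i))
    (xbar : H) (R : ℝ) (hR : 0 < R)
    (hball : closedBall xbar R ⊆ ⋂ i, C i)
    (α : Fin m → ℝ) (hα : ∀ i, 0 < α i) (hαsum : ∑ i, α i = 1)
    (P : Fin m → H → H)
    (hP : ∀ i z, P i z ∈ C i ∧ ∀ y ∈ C i, ‖z - P i z‖ ≤ ‖z - y‖)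
    (f : H → ℝ)
    (hf : ∀ x, f x = (1 / 2) * ∑ i, α i * Metric.infDist x (C i) ^ 2) :
    ∀ ρ : ℝ, 0 ≤ ρ → ∀ x : H, ‖x - xbar‖ ≤ ρ →
      (Metric.infDist x (⋂ i, C i) ≤
        (1 + 2 * ρ / R) ^ (m - 1) * Real.sqrt (2 / ⨅ i, α i) * Real.sqrt (f x)) ∧
      (0 < f x →
        1 ≤ (Real.sqrt (2 * ((1 / 4) * (1 + 2 * ρ / R) ^ ((2 : ℤ) - 2 * m) *
              ⨅ i, α i) * f x))⁻¹ * ‖∑ i, α i • (x - P i x)‖) := by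
  intro ρ hρ x hx
  have hm0 : 0 < m := by omega
  haveI : Nonempty (Fin m) := ⟨⟨0, hm0⟩⟩
  set μ := ⨅ i, α i with hμdef
  have hμle : ∀ i, μ ≤ α i := fun i => ciInf_le (Finite.bddBelow_range α) i
  have hμpos : 0 < μ := by
    obtain ⟨j, hj⟩ := exists_eq_ciInf_of_finite (f := α)
    rw [hμdef, ← hj]
    exact hα j
  have hfx0 : 0 ≤ f x := by
    rw [hf]
    apply mul_nonneg (by norm_num)
    exact Finset.sum_nonneg fun i _ => mul_nonneg (hα i).le (sq_nonneg _)
  set d := Real.sqrt (2 / μ) * Real.sqrt (f x) with hddef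
  have hd0 : 0 ≤ d := mul_nonneg (Real.sqrt_nonneg _) (Real.sqrt_nonneg _)
  have hdi : ∀ i, infDist x (C i) ≤ d := by
    intro i
    have h1 : α i * infDist x (C i) ^ 2 ≤ 2 * f x := by
      rw [hf]
      have h0 : ∀ j ∈ Finset.univ, 0 ≤ α j * infDist x (C j) ^ 2 := fun j _ =>
        mul_nonneg (hα j).le (sq_nonneg _)
      have h2 := Finset.single_le_sum h0 (Finset.mem_univ i)
      linarith
    have h2 : infDist x (C i) ^ 2 ≤ (2 / μ) * f x := by
      rw [div_mul_eq_mul_div, le_div_iff₀ hμpos]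
      nlinarith [hμle i, infDist_nonneg (s := C i) (x := x)]
    calc infDist x (C i) = Real.sqrt (infDist x (C i) ^ 2) :=
          (Real.sqrt_sq infDist_nonneg).symm
      _ ≤ Real.sqrt ((2 / μ) * f x) := Real.sqrt_le_sqrt h2
      _ = d := by rw [hddef, ← Real.sqrt_mul (by positivity)]
  have hmain : infDist x (⋂ i, C i) ≤ (1 + 2 * ρ / R) ^ (m - 1) * d := by
    have heq : (⋂ i : Fin m, ⋂ (_ : (i : ℕ) < m), C i) = ⋂ i, C i := by
      ext w
      simp only [mem_iInter]
      exact ⟨fun h i => h i i.isLt, fun h i _ => h i⟩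
    rw [← heq]
    exact chain' m C hclosed hconv xbar R hR hball x ρ hx d hd0 hdi m (by omega) le_rfl
  constructor
  · calc infDist x (⋂ i, C i) ≤ (1 + 2 * ρ / R) ^ (m - 1) * d := hmain
      _ = (1 + 2 * ρ / R) ^ (m - 1) * Real.sqrt (2 / μ) * Real.sqrt (f x) := by
          rw [hddef]; ring
  · intro hfpos
    set g := ∑ i, α i • (x - P i x) with hgdef
    have hPd : ∀ i, ‖x - P i x‖ = infDist x (C i) := by
      intro i
      refine le_antisymm ?_ ?_
      · haveI : Nonempty (C i) := ⟨⟨P i x, (hP i x).1⟩⟩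
        rw [infDist_eq_iInf]
        apply le_ciInf
        intro w
        rw [dist_eq_norm]
        exact (hP i x).2 w w.2
      · have h := infDist_le_dist_of_mem (x := x) (hP i x).1
        rwa [dist_eq_norm] at h
    have hPvar : ∀ i, ∀ w ∈ C i, ⟪x - P i x, w - P i x⟫ ≤ 0 := by
      intro i
      have hiInf : ‖x - P i x‖ = ⨅ w : C i, ‖x - w‖ := by
        rw [hPd i, infDist_eq_iInf]
        simp only [dist_eq_norm]
      exact (norm_eq_iInf_iff_real_inner_le_zero (hconv i) (hP i x).1).1 hiInf
    have hCcl : IsClosed (⋂ i, C i) := isClosed_iInter fun i => hclosed i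
    have hCcv : Convex ℝ (⋂ i, C i) := convex_iInter fun i => hconv i
    have hCne : (⋂ i, C i).Nonempty := ⟨xbar, hball (mem_closedBall_self hR.le)⟩
    obtain ⟨p, hpC, hpn, -⟩ := proj_exists' (⋂ i, C i) hCcl hCcv hCne x
    have hip : 2 * f x ≤ ⟪g, x - p⟫ := by
      have hg : ⟪g, x - p⟫ = ∑ i, α i * ⟪x - P i x, x - p⟫ := by
        rw [hgdef, sum_inner]
        refine Finset.sum_congr rfl fun i _ => ?_
        rw [real_inner_smul_left]
      rw [hg, hf]
      have hterm : ∀ i ∈ Finset.univ, α i * infDist x (C i) ^ 2 ≤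
          α i * ⟪x - P i x, x - p⟫ := by
        intro i _
        apply mul_le_mul_of_nonneg_left _ (hα i).le
        have h1 : ⟪x - P i x, p - P i x⟫ ≤ 0 := hPvar i p (mem_iInter.1 hpC i)
        have h2 : ⟪x - P i x, x - p⟫ =
            ‖x - P i x‖ ^ 2 - ⟪x - P i x, p - P i x⟫ := by
          rw [show x - p = (x - P i x) - (p - P i x) from by abel, inner_sub_right,
            real_inner_self_eq_norm_sq]
        rw [← hPd i]
        linarith
      have := Finset.sum_le_sum hterm
      linarith
    have hcs : ⟪g, x - p⟫ ≤ ‖g‖ * ‖x - p‖ := real_inner_le_norm g (x - p)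
    set e := (1 + 2 * ρ / R) ^ (m - 1) with hedef
    have hK1 : 1 ≤ 1 + 2 * ρ / R := by
      have : 0 ≤ 2 * ρ / R := div_nonneg (by linarith) hR.le
      linarith
    have he1 : 1 ≤ e := one_le_pow₀ hK1
    have he0 : 0 < e := lt_of_lt_of_le one_pos he1
    have h2f : 2 * f x ≤ ‖g‖ * (e * d) := by
      have h1 : ‖x - p‖ ≤ e * d := by rw [hpn]; exact hmain
      calc 2 * f x ≤ ‖g‖ * ‖x - p‖ := le_trans hip hcs
        _ ≤ ‖g‖ * (e * d) := mul_le_mul_of_nonneg_left h1 (norm_nonneg g)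
    have hzpow : (1 + 2 * ρ / R) ^ ((2 : ℤ) - 2 * (m : ℤ)) = (e ^ 2)⁻¹ := by
      have h1 : ((2 : ℤ) - 2 * (m : ℤ)) = -(((m - 1) * 2 : ℕ) : ℤ) := by omega
      rw [h1, zpow_neg, zpow_natCast, pow_mul, hedef]
    rw [hzpow]
    set S := Real.sqrt (2 * (1 / 4 * (e ^ 2)⁻¹ * μ) * f x) with hSdef
    have hS : S = Real.sqrt (μ * f x / (2 * e ^ 2)) := by
      rw [hSdef]
      congr 1
      field_simp
      ring
    have hsf : 0 < Real.sqrt (f x) := Real.sqrt_pos.2 hfpos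
    have hdpos : 0 < d := mul_pos (Real.sqrt_pos.2 (by positivity)) hsf
    have hSpos : 0 < S := by
      rw [hS]
      exact Real.sqrt_pos.2 (div_pos (mul_pos hμpos hfpos) (by positivity))
    have hSg : S ≤ ‖g‖ := by
      have hcpos : 0 < e * d := mul_pos he0 hdpos
      have hSed : S * (e * d) = f x := by
        have hd' : d = Real.sqrt (2 / μ * f x) := by
          rw [hddef, ← Real.sqrt_mul (by positivity)]
        have h1 : S * d = Real.sqrt ((μ * f x / (2 * e ^ 2)) * (2 / μ * f x)) := by
          rw [hS, hd', ← Real.sqrt_mul (by positivity)]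
        have h2 : (μ * f x / (2 * e ^ 2)) * (2 / μ * f x) = (f x / e) ^ 2 := by
          field_simp
        have h3 : S * d = f x / e := by
          rw [h1, h2, Real.sqrt_sq (div_nonneg hfx0 he0.le)]
        calc S * (e * d) = (S * d) * e := by ring
          _ = (f x / e) * e := by rw [h3]
          _ = f x := div_mul_cancel₀ _ he0.ne'
      have : S * (e * d) ≤ ‖g‖ * (e * d) := by
        rw [hSed]
        linarith
      exact le_of_mul_le_mul_right this hcpos
    calc (1 : ℝ) = S⁻¹ * S := (inv_mul_cancel₀ hSpos.ne').symm
      _ ≤ S⁻¹ * ‖g‖ := mul_le_mul_of_nonneg_left hSg (inv_nonneg.2 hSpos.le)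
end
end

section
/- Error bound for the alternating-projection potential: let C₁, C₂ be closed convex subsets of H with B(x̄, R) ⊆ C := C₁ ∩ C₂ for some x̄ ∈ H, R > 0, and let g(x) = ½ dist(x, C₂)² for x ∈ C₁. Then for every ρ ≥ 0 and every x ∈ C₁ with ‖x − x̄‖ ≤ ρ, dist(x, C₁ ∩ C₂) ≤ 2(1 + 2ρ/R)·√(g(x)), i.e. dist(x, C₁ ∩ C₂) ≤ √2·(1 + 2ρ/R)·dist(x, C₂). -/
open Metric Set Filter

noncomputable section

/-- **Error bound for the alternating-projection potential**: with `C₁, C₂`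
closed convex subsets of a real Hilbert space and `B(x̄,R) ⊆ C₁ ∩ C₂`, for every
`ρ ≥ 0` and every `x ∈ C₁` with `‖x − x̄‖ ≤ ρ`, one has
`dist(x, C₁ ∩ C₂) ≤ 2(1 + 2ρ/R)·√(g(x))` where `g(x) = ½ dist(x,C₂)²`,
i.e. `dist(x, C₁ ∩ C₂) ≤ √2·(1 + 2ρ/R)·dist(x, C₂)`. -/
theorem stmt7 {H : Type*} [NormedAddCommGroup H] [InnerProductSpace ℝ H]
    [CompleteSpace H]
    (C₁ C₂ : Set H)
    (hclosed₁ : IsClosed C₁) (hconv₁ : Convex ℝ C₁)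
    (hclosed₂ : IsClosed C₂) (hconv₂ : Convex ℝ C₂)
    (xbar : H) (R : ℝ) (hR : 0 < R)
    (hball : closedBall xbar R ⊆ C₁ ∩ C₂) :
    ∀ ρ : ℝ, 0 ≤ ρ → ∀ x ∈ C₁, ‖x - xbar‖ ≤ ρ →
      Metric.infDist x (C₁ ∩ C₂) ≤
        2 * (1 + 2 * ρ / R) * Real.sqrt ((1 / 2) * Metric.infDist x C₂ ^ 2) ∧
      Metric.infDist x (C₁ ∩ C₂) ≤
        Real.sqrt 2 * (1 + 2 * ρ / R) * Metric.infDist x C₂ := by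
  intro ρ hρ x hx hxρ
  have hxbar₁ : xbar ∈ C₁ := (hball (mem_closedBall_self hR.le)).1
  have hC₂ne : C₂.Nonempty := ⟨xbar, (hball (mem_closedBall_self hR.le)).2⟩
  have hdnn : 0 ≤ infDist x C₂ := infDist_nonneg
  -- key inequality
  have key : Metric.infDist x (C₁ ∩ C₂) ≤
      Real.sqrt 2 * (1 + 2 * ρ / R) * Metric.infDist x C₂ := by
    obtain ⟨y, hy, hyn⟩ :=
      exists_norm_eq_iInf_of_complete_convex hC₂ne hclosed₂.isComplete hconv₂ x
    have hyd : infDist x C₂ = dist x y := by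
      rw [infDist_eq_iInf, dist_eq_norm, hyn]
      congr 1; ext w; rw [dist_eq_norm]
    set d : ℝ := infDist x C₂ with hd
    have hdxy : d = ‖x - y‖ := by rw [hyd, dist_eq_norm]
    have hsqrt2 : (1:ℝ) ≤ Real.sqrt 2 := by
      nlinarith [Real.sq_sqrt (by norm_num : (2:ℝ) ≥ 0), Real.sqrt_nonneg 2]
    rcases eq_or_lt_of_le hdnn with h0 | hdpos
    · -- d = 0 : x ∈ C₂
      have hx₂ : x ∈ C₂ := by
        rw [← hclosed₂.closure_eq]
        exact (mem_closure_iff_infDist_zero hC₂ne).2 h0.symm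
      have : infDist x (C₁ ∩ C₂) = 0 := by
        exact infDist_zero_of_mem (Set.mem_inter hx hx₂)
      rw [this]
      positivity
    · -- d > 0
      set lam : ℝ := d / (d + R) with hlam
      have hdR : 0 < d + R := by linarith
      have hlam0 : 0 ≤ lam := by positivity
      have hlam1 : lam ≤ 1 := by
        rw [hlam, div_le_one hdR]; linarith
      set w : H := xbar + (R / d) • (x - y) with hw
      have hwball : w ∈ closedBall xbar R := by
        rw [mem_closedBall, dist_eq_norm, hw]
        have : xbar + (R / d) • (x - y) - xbar = (R / d) • (x - y) := by abel
        rw [this, norm_smul, Real.norm_eq_abs, abs_of_nonneg (by positivity), ← hdxy]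
        rw [div_mul_cancel₀]
        exact hdpos.ne'
      set z : H := lam • w + (1 - lam) • y with hz
      have hz₂ : z ∈ C₂ := hconv₂ (hball hwball).2 hy hlam0 (by linarith) (by ring)
      have hzeq : z = lam • xbar + (1 - lam) • x := by
        rw [hz, hw, smul_add, smul_smul]
        have : lam * (R / d) = 1 - lam := by
          rw [hlam]; field_simp; ring
        rw [this]
        module
      have hz₁ : z ∈ C₁ := by
        rw [hzeq]; exact hconv₁ hxbar₁ hx hlam0 (by linarith) (by ring)
      have hdist : dist x z = lam * ‖x - xbar‖ := by
        rw [dist_eq_norm, hzeq]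
        have : x - (lam • xbar + (1 - lam) • x) = lam • (x - xbar) := by
          module
        rw [this, norm_smul, Real.norm_eq_abs, abs_of_nonneg hlam0]
      have h1 : infDist x (C₁ ∩ C₂) ≤ lam * ρ := by
        calc infDist x (C₁ ∩ C₂) ≤ dist x z := infDist_le_dist_of_mem ⟨hz₁, hz₂⟩
        _ = lam * ‖x - xbar‖ := hdist
        _ ≤ lam * ρ := by nlinarith
      have h2 : lam * ρ ≤ (d / R) * ρ := by
        apply mul_le_mul_of_nonneg_right _ hρ
        rw [hlam, div_le_div_iff₀ hdR hR]
        nlinarith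
      have h3 : (d / R) * ρ ≤ Real.sqrt 2 * (1 + 2 * ρ / R) * d := by
        rw [div_mul_eq_mul_div, div_le_iff₀ hR]
        have hρR : 0 ≤ ρ / R := by positivity
        have : Real.sqrt 2 * (1 + 2 * ρ / R) * d * R
            = Real.sqrt 2 * d * R + 2 * Real.sqrt 2 * (ρ * d) := by
          field_simp
        rw [this]
        nlinarith [mul_nonneg hρ hdpos.le, mul_nonneg (mul_nonneg (Real.sqrt_nonneg 2) hdpos.le) hR.le]
      linarith
  constructor
  · have : Real.sqrt ((1 / 2) * infDist x C₂ ^ 2)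
        = Real.sqrt (1/2) * infDist x C₂ := by
      rw [Real.sqrt_mul (by norm_num), Real.sqrt_sq hdnn]
    rw [this]
    have h2s : 2 * Real.sqrt (1/2) = Real.sqrt 2 := by
      rw [show (1:ℝ)/2 = 2⁻¹ by norm_num, Real.sqrt_inv]
      rw [eq_comm, ← Real.sqrt_mul_self (by norm_num : (0:ℝ) ≤ 2)]
      field_simp
      rw [Real.sq_sqrt (by positivity)]
    calc infDist x (C₁ ∩ C₂) ≤ Real.sqrt 2 * (1 + 2 * ρ / R) * infDist x C₂ := key
    _ = 2 * (1 + 2 * ρ / R) * (Real.sqrt (1/2) * infDist x C₂) := by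
        rw [← h2s]; ring
  · exact key
end
end

section
/- The forward–backward splitting method generates subgradient descent sequences: let g : H → (−∞,+∞] be proper, lower-semicontinuous and convex, let h : H → ℝ be convex and differentiable with ∇h Lipschitz continuous with constant L > 0, and set f = g + h. Let 0 < λ⁻ ≤ λ_k ≤ λ⁺ < 2/L for all k, let x₀ ∈ dom g, and suppose that for each k ≥ 0, x_{k+1} minimizes over H the function z ↦ g(z) + ⟨∇h(x_k), z − x_k⟩ + (1/(2λ_k))‖z − x_k‖². Then with a = 1/λ⁺ − L/2 and b = 1/λ⁻ + L, for every k ≥ 0: (H1) f(x_{k+1}) + a‖x_{k+1} − x_k‖² ≤ f(x_k), and (H2) there exists ω ∈ ∂f(x_{k+1}) with ‖ω‖ ≤ b‖x_{k+1} − x_k‖. (Proposition 4.2.) -/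
open Metric Set Filter
open scoped RealInnerProductSpace Topology

noncomputable section

variable {H : Type*} [NormedAddCommGroup H] [InnerProductSpace ℝ H] [CompleteSpace H]

lemma lineDeriv_aux {h : H → ℝ} {h' : H → H} (hhgrad : ∀ z, HasGradientAt h (h' z) z)
    (z d : H) (t : ℝ) :
    HasDerivAt (fun s : ℝ => h (z + s • d)) ⟪h' (z + t • d), d⟫ t := by
  have hc : HasDerivAt (fun s : ℝ => z + s • d) d t := by
    simpa using ((hasDerivAt_id t).smul_const d).const_add z
  have := (hasGradientAt_iff_hasFDerivAt.mp (hhgrad (z + t • d))).comp_hasDerivAt t hc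
  simp [InnerProductSpace.toDual_apply_apply] at this
  exact this

lemma descent_aux {h : H → ℝ} {h' : H → H} {L : ℝ}
    (hhgrad : ∀ z, HasGradientAt h (h' z) z)
    (hhlip : ∀ z w, ‖h' z - h' w‖ ≤ L * ‖z - w‖) (z w : H) :
    h w ≤ h z + ⟪h' z, w - z⟫ + L / 2 * ‖w - z‖ ^ 2 := by
  set d := w - z with hd
  set Φ : ℝ → ℝ := fun s => h (z + s • d) - s * ⟪h' z, d⟫ - L / 2 * s ^ 2 * ‖d‖ ^ 2 with hΦ
  have hc : Continuous h := continuous_iff_continuousAt.mpr fun y =>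
    (hhgrad y).differentiableAt.continuousAt
  have key : ∀ t : ℝ, HasDerivAt Φ
      (⟪h' (z + t • d), d⟫ - ⟪h' z, d⟫ - L * t * ‖d‖ ^ 2) t := by
    intro t
    have h1 := lineDeriv_aux hhgrad z d t
    have h2 : HasDerivAt (fun s : ℝ => s * ⟪h' z, d⟫) ⟪h' z, d⟫ t := by
      simpa using (hasDerivAt_id t).mul_const ⟪h' z, d⟫
    have h3 : HasDerivAt (fun s : ℝ => L / 2 * s ^ 2 * ‖d‖ ^ 2) (L * t * ‖d‖ ^ 2) t := by
      have h4 : HasDerivAt (fun s : ℝ => s ^ 2) (2 * t) t := by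
        simpa using hasDerivAt_pow 2 t
      have := (h4.const_mul (L / 2)).mul_const (‖d‖ ^ 2)
      exact this.congr_deriv (by ring)
    exact (h1.sub h2).sub h3
  have anti : AntitoneOn Φ (Icc 0 1) := by
    apply antitoneOn_of_deriv_nonpos (convex_Icc 0 1)
    · exact (((hc.comp (continuous_const.add (continuous_id.smul continuous_const))).sub
        (continuous_id.mul continuous_const)).sub
        ((continuous_const.mul (continuous_pow 2)).mul continuous_const)).continuousOn
    · exact fun t _ => (key t).differentiableAt.differentiableWithinAt
    · intro t ht
      rw [interior_Icc] at ht
      rw [(key t).deriv]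
      have h5 : ⟪h' (z + t • d) - h' z, d⟫ ≤ L * t * ‖d‖ ^ 2 := by
        calc ⟪h' (z + t • d) - h' z, d⟫ ≤ ‖h' (z + t • d) - h' z‖ * ‖d‖ :=
              real_inner_le_norm _ _
          _ ≤ (L * ‖z + t • d - z‖) * ‖d‖ := by
              gcongr; exact hhlip _ _
          _ = L * t * ‖d‖ ^ 2 := by
              rw [add_sub_cancel_left, norm_smul, Real.norm_eq_abs, abs_of_pos ht.1]; ring
      rw [inner_sub_left] at h5
      linarith
  have h01 := anti (left_mem_Icc.mpr zero_le_one) (right_mem_Icc.mpr zero_le_one) zero_le_one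
  have e0 : Φ 0 = h z := by simp [hΦ]
  have e1 : Φ 1 = h w - ⟪h' z, d⟫ - L / 2 * ‖d‖ ^ 2 := by
    simp [hΦ, hd]
  rw [e0, e1] at h01
  linarith

lemma gradIneq_aux {h : H → ℝ} {h' : H → H}
    (hhconv : ConvexOn ℝ Set.univ h)
    (hhgrad : ∀ z, HasGradientAt h (h' z) z) (p y : H) :
    h p + ⟪h' p, y - p⟫ ≤ h y := by
  set e := y - p with he
  have hd0 : HasDerivAt (fun s : ℝ => h (p + s • e)) ⟪h' p, e⟫ 0 := by
    have := lineDeriv_aux hhgrad p e 0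
    simpa using this
  have hslope : Tendsto (slope (fun s : ℝ => h (p + s • e)) 0) (𝓝[>] 0) (𝓝 ⟪h' p, e⟫) :=
    (hasDerivAt_iff_tendsto_slope.mp hd0).mono_left
      (nhdsWithin_mono _ fun t ht => ne_of_gt ht)
  have hbound : ∀ᶠ t in 𝓝[>] (0:ℝ), slope (fun s : ℝ => h (p + s • e)) 0 t ≤ h y - h p := by
    filter_upwards [Ioo_mem_nhdsGT_of_mem (Set.mem_Ico.mpr ⟨le_refl 0, zero_lt_one⟩)]
      with t ht
    obtain ⟨ht0, ht1⟩ := ht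
    have hcv := hhconv.2 (Set.mem_univ y) (Set.mem_univ p) (le_of_lt ht0)
      (by linarith : (0:ℝ) ≤ 1 - t) (by ring)
    have heq : t • y + (1 - t) • p = p + t • e := by
      rw [he, smul_sub, sub_smul, one_smul]; abel
    rw [heq] at hcv
    rw [slope_def_field, sub_zero, div_le_iff₀ ht0]
    simp only [zero_smul, add_zero]
    simp only [smul_eq_mul] at hcv
    nlinarith
  have := le_of_tendsto hslope hbound
  linarith


/-- **Proposition 4.2** (the forward–backward splitting method generates
subgradient descent sequences): let `g` be proper lsc convex, `h` convex and
differentiable with `L`-Lipschitz gradient `h'`, `f = g + h`, and let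
`0 < λ⁻ ≤ λ_k ≤ λ⁺ < 2/L`.  If `x₀ ∈ dom g` and each `x_{k+1}` minimizes
`z ↦ g(z) + ⟨∇h(x_k), z − x_k⟩ + ‖z − x_k‖²/(2λ_k)`, then with
`a = 1/λ⁺ − L/2` and `b = 1/λ⁻ + L` the sequence satisfies, for every `k`:
(H1) `f(x_{k+1}) + a‖x_{k+1} − x_k‖² ≤ f(x_k)`, and
(H2) there is `ω ∈ ∂f(x_{k+1})` with `‖ω‖ ≤ b‖x_{k+1} − x_k‖`. -/
theorem stmt8 (g : H → EReal) (h : H → ℝ) (h' : H → H) (L : ℝ) (hL : 0 < L)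
    (hgbot : ∀ x, g x ≠ ⊥) (hgtop : ∃ x, g x ≠ ⊤)
    (hglsc : LowerSemicontinuous g)
    (hgconv : ∀ x y : H, ∀ t : ℝ, 0 < t → t < 1 →
      g (t • x + (1 - t) • y) ≤ (t : EReal) * g x + ((1 - t : ℝ) : EReal) * g y)
    (hhconv : ConvexOn ℝ Set.univ h)
    (hhgrad : ∀ z, HasGradientAt h (h' z) z)
    (hhlip : ∀ z w, ‖h' z - h' w‖ ≤ L * ‖z - w‖)
    (lamm lamp : ℝ) (lam : ℕ → ℝ)
    (hlamm : 0 < lamm) (hlamp : lamp < 2 / L)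
    (hlam : ∀ k, lamm ≤ lam k ∧ lam k ≤ lamp)
    (x : ℕ → H) (hx0 : g (x 0) ≠ ⊤)
    (hiter : ∀ k, ∀ z : H,
      g (x (k + 1)) +
          ((⟪h' (x k), x (k + 1) - x k⟫ + ‖x (k + 1) - x k‖ ^ 2 / (2 * lam k) : ℝ) : EReal)
        ≤ g z + ((⟪h' (x k), z - x k⟫ + ‖z - x k‖ ^ 2 / (2 * lam k) : ℝ) : EReal)) :
    ∀ k : ℕ,
      (g (x (k + 1)) + (h (x (k + 1)) : EReal) +
          (((1 / lamp - L / 2) * ‖x (k + 1) - x k‖ ^ 2 : ℝ) : EReal)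
        ≤ g (x k) + (h (x k) : EReal)) ∧
      ∃ ω ∈ subdiff (fun y => g y + (h y : EReal)) (x (k + 1)),
        ‖ω‖ ≤ (1 / lamm + L) * ‖x (k + 1) - x k‖ := by
  -- finiteness of g along the sequence
  have hfin : ∀ n, g (x n) ≠ ⊤ := by
    intro n
    induction n with
    | zero => exact hx0
    | succ m ih =>
      intro htop
      have hit := hiter m (x m)
      have hrm : ((g (x m)).toReal : EReal) = g (x m) := EReal.coe_toReal ih (hgbot _)
      rw [htop, ← hrm, ← EReal.coe_add, EReal.top_add_coe] at hit
      exact EReal.coe_ne_top _ (top_le_iff.mp hit)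
  set r : ℕ → ℝ := fun n => (g (x n)).toReal with hr
  have hre : ∀ n, g (x n) = ((r n : ℝ) : EReal) := fun n =>
    (EReal.coe_toReal (hfin n) (hgbot _)).symm
  intro k
  obtain ⟨hlm, hlp⟩ := hlam k
  have hlk0 : 0 < lam k := lt_of_lt_of_le hlamm hlm
  have hlamp0 : 0 < lamp := lt_of_lt_of_le hlk0 hlp
  set z := x k with hz
  set p := x (k + 1) with hp
  set d := p - z with hd
  -- key inequality
  have key : ∀ y : H, ∀ ry : ℝ, g y = (ry : EReal) →
      r (k+1) ≤ ry + ⟪h' z, y - p⟫ + ⟪d, y - p⟫ / lam k := by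
    intro y ry hy
    set e := y - p with he
    have hstep : ∀ t ∈ Ioo (0:ℝ) 1,
        r (k+1) ≤ ry + ⟪h' z, e⟫ + ⟪d, e⟫ / lam k + t * (‖e‖^2 / (2 * lam k)) := by
      rintro t ⟨ht0, ht1⟩
      have hit := hiter k (t • y + (1 - t) • p)
      rw [← hz, ← hp] at hit
      have hcv := hgconv y p t ht0 ht1
      rw [hy, hre (k+1)] at hcv
      rw [← EReal.coe_mul, ← EReal.coe_mul, ← EReal.coe_add] at hcv
      have hit2 : g p + ((⟪h' z, p - z⟫ + ‖p - z‖ ^ 2 / (2 * lam k) : ℝ) : EReal)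
          ≤ (((t * ry + (1 - t) * r (k+1)) +
              (⟪h' z, t • y + (1 - t) • p - z⟫
                + ‖t • y + (1 - t) • p - z‖ ^ 2 / (2 * lam k)) : ℝ) : EReal) := by
        refine le_trans hit ?_
        rw [EReal.coe_add]
        exact add_le_add_left hcv _
      rw [hre (k+1), ← EReal.coe_add, EReal.coe_le_coe_iff] at hit2
      have hw : t • y + (1 - t) • p - z = d + t • e := by
        rw [hd, he, smul_sub, sub_smul, one_smul]; abel
      rw [hw] at hit2
      rw [inner_add_right, real_inner_smul_right] at hit2
      have hn1 : ‖d + t • e‖ ^ 2 = ‖d‖^2 + 2 * (t * ⟪d, e⟫) + t^2 * ‖e‖^2 := by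
        rw [norm_add_sq_real, real_inner_smul_right, norm_smul, Real.norm_eq_abs, mul_pow, sq_abs]
      rw [hn1] at hit2
      have e1 : (‖d‖^2 + 2 * (t * ⟪d, e⟫) + t^2 * ‖e‖^2) / (2 * lam k)
          = ‖d‖^2 / (2 * lam k) + t * (⟪d, e⟫ / lam k) + t^2 * (‖e‖^2 / (2 * lam k)) := by
        field_simp
      rw [e1] at hit2
      have hpz : p - z = d := hd.symm
      rw [hpz] at hit2
      nlinarith [hit2, ht0, sq_nonneg t]
    have htend : Tendsto (fun t : ℝ => ry + ⟪h' z, e⟫ + ⟪d, e⟫ / lam k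
        + t * (‖e‖^2 / (2 * lam k))) (𝓝[>] 0)
        (𝓝 (ry + ⟪h' z, e⟫ + ⟪d, e⟫ / lam k + 0 * (‖e‖^2 / (2 * lam k)))) :=
      ((continuous_const.add (continuous_id.mul continuous_const)).tendsto 0).mono_left
        nhdsWithin_le_nhds
    have hlim := ge_of_tendsto htend (by
      filter_upwards [Ioo_mem_nhdsGT_of_mem (Set.mem_Ico.mpr ⟨le_refl 0, zero_lt_one⟩)]
        with t ht
      exact hstep t ht)
    simpa using hlim
  -- specialize to y = z
  have keyz : r (k+1) + ⟪h' z, d⟫ + ‖d‖^2 / lam k ≤ r k := by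
    have hkz := key z (r k) (hre k)
    have hzp : z - p = -d := by rw [hd]; abel
    rw [hzp, inner_neg_right, inner_neg_right, real_inner_self_eq_norm_sq, neg_div] at hkz
    linarith
  constructor
  · -- H1
    have hdes := descent_aux hhgrad hhlip z p
    have hfrac : (1/lamp) * ‖d‖^2 ≤ ‖d‖^2 / lam k := by
      have h14 : 1/lamp ≤ 1/lam k := one_div_le_one_div_of_le hlk0 hlp
      calc (1/lamp) * ‖d‖^2 ≤ (1/lam k) * ‖d‖^2 :=
            mul_le_mul_of_nonneg_right h14 (sq_nonneg _)
        _ = ‖d‖^2 / lam k := by ring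
    have hH1 : r (k+1) + h p + (1/lamp - L/2) * ‖d‖^2 ≤ r k + h z := by
      have hdz : p - z = d := hd.symm
      rw [hdz] at hdes
      nlinarith [keyz, hdes, hfrac]
    rw [hre (k+1), hre k, ← EReal.coe_add, ← EReal.coe_add, ← EReal.coe_add,
      EReal.coe_le_coe_iff]
    exact hH1
  · -- H2
    refine ⟨h' p - h' z - (lam k)⁻¹ • d, ?_, ?_⟩
    · simp only [subdiff, Set.mem_setOf_eq]
      intro y
      by_cases hy : g y = ⊤
      · have : g y + (h y : EReal) = ⊤ := by rw [hy]; exact EReal.top_add_coe _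
        rw [this]; exact le_top
      · have hyr : g y = (((g y).toReal : ℝ) : EReal) := (EReal.coe_toReal hy (hgbot y)).symm
        have hk := key y (g y).toReal hyr
        have hgi := gradIneq_aux hhconv hhgrad p y
        have hω : ⟪h' p - h' z - (lam k)⁻¹ • d, y - p⟫
            = ⟪h' p, y - p⟫ - ⟪h' z, y - p⟫ - ⟪d, y - p⟫ / lam k := by
          rw [inner_sub_left, inner_sub_left, real_inner_smul_left]
          ring
        rw [hre (k+1), hyr, hω, ← EReal.coe_add, ← EReal.coe_add, ← EReal.coe_add,
          EReal.coe_le_coe_iff]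
        linarith
    · have h1 : ‖h' p - h' z - (lam k)⁻¹ • d‖ ≤ ‖h' p - h' z‖ + ‖(lam k)⁻¹ • d‖ :=
        norm_sub_le _ _
      have h2 : ‖h' p - h' z‖ ≤ L * ‖d‖ := by
        have := hhlip p z; rwa [← hd] at this
      have h3 : ‖(lam k)⁻¹ • d‖ = (lam k)⁻¹ * ‖d‖ := by
        rw [norm_smul, Real.norm_eq_abs, abs_of_pos (inv_pos.mpr hlk0)]
      have h4 : (lam k)⁻¹ ≤ 1/lamm := by
        rw [← one_div]; exact one_div_le_one_div_of_le hlamm hlm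
      nlinarith [h1, h2, h3, h4, norm_nonneg d, norm_nonneg (h' p - h' z - (lam k)⁻¹ • d)]
end
end

section
/- Convergence of subgradient descent methods for convex KL functions: let r̄ > 0 and φ ∈ 𝒦(0,r̄), and assume f satisfies the KL inequality φ′(f(x))·‖∂⁰f(x)‖ ≥ 1 for every x with 0 < f(x) < r̄. Let (x_k)_{k≥0} be a subgradient descent sequence for f with constants a, b > 0 and f(x₀) ≤ r₀ < r̄. Then (x_k) converges strongly to some x* ∈ argmin f, and for every k ≥ 1, ‖x_k − x*‖ ≤ (b/a)·φ(f(x_k)) + √(f(x_{k−1})/a). (Theorem 4.3.) -/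
open Metric Set Filter
open scoped RealInnerProductSpace Topology

noncomputable section

variable {H : Type*} [NormedAddCommGroup H] [InnerProductSpace ℝ H] [CompleteSpace H]

/-- Tangent-line inequality for a concave function: `φ'(t) ≤ slope(s,t)`. -/
theorem concave_deriv_le_slope (rbar : ℝ) (φ φ' : ℝ → ℝ)
    (hφderiv : ∀ s ∈ Ioo (0 : ℝ) rbar, HasDerivAt φ (φ' s) s)
    (hφconc : ConcaveOn ℝ (Ico 0 rbar) φ)
    (s t : ℝ) (hs : 0 ≤ s) (hst : s < t) (htb : t < rbar) :
    φ' t * (t - s) ≤ φ t - φ s := by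
  have ht0 : 0 < t := lt_of_le_of_lt hs hst
  have hd := hφderiv t ⟨ht0, htb⟩
  have hslope := hasDerivAt_iff_tendsto_slope.mp hd
  have hkey : φ' t ≤ (φ t - φ s) / (t - s) := by
    have hmem : Ioo s t ∈ 𝓝[<] t := Ioo_mem_nhdsLT_of_mem ⟨hst, le_refl t⟩
    have hle : 𝓝[<] t ≤ 𝓝[≠] t :=
      nhdsWithin_mono t (fun u (hu : u < t) => ne_of_lt hu)
    refine le_of_tendsto (hslope.mono_left hle) ?_
    filter_upwards [hmem] with u hu
    -- slope φ t u = (φ u - φ t) / (u - t)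
    have hsu : s < u := hu.1
    have hut : u < t := hu.2
    have hanti := hφconc.slope_anti_adjacent (x := s) (y := u) (z := t)
      ⟨hs, lt_trans hst htb⟩ ⟨ht0.le, htb⟩ hsu hut
    -- hanti : (φ t - φ u)/(t - u) ≤ (φ u - φ s)/(u - s)
    have h1 : (φ t - φ u) / (t - u) * (u - s) ≤ φ u - φ s := by
      have := mul_le_mul_of_nonneg_right hanti (le_of_lt (sub_pos.mpr hsu))
      rwa [div_mul_cancel₀ _ (ne_of_gt (sub_pos.mpr hsu))] at this
    have h2 : (φ t - φ u) / (t - u) * (t - u) = φ t - φ u :=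
      div_mul_cancel₀ _ (ne_of_gt (sub_pos.mpr hut))
    have h3 : (φ t - φ u) / (t - u) * (t - s) ≤ φ t - φ s := by nlinarith
    have h4 : (φ t - φ u) / (t - u) ≤ (φ t - φ s) / (t - s) :=
      (le_div_iff₀ (sub_pos.mpr (lt_trans hsu hut))).mpr h3
    have h5 : slope φ t u = (φ t - φ u) / (t - u) := by
      rw [slope_def_field]
      rw [div_eq_div_iff (ne_of_lt (sub_neg.mpr hut)) (ne_of_gt (sub_pos.mpr hut))]
      ring
    rw [h5]
    exact h4
  have := mul_le_mul_of_nonneg_right hkey (le_of_lt (sub_pos.mpr hst))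
  rwa [div_mul_cancel₀ _ (ne_of_gt (sub_pos.mpr hst))] at this

/-- **Theorem 4.3** (convergence of subgradient descent methods for convex KL
functions): assume `f` is proper lsc convex with `min f = 0`, satisfies the KL
inequality `φ'(f(x))·‖∂⁰f(x)‖ ≥ 1` on `[0 < f < r̄]` for `φ ∈ 𝒦(0,r̄)`, and
`(x_k)` is a subgradient descent sequence (constants `a, b > 0`) with
`f(x₀) ≤ r₀ < r̄`.  Then `x_k` converges strongly to some `x* ∈ argmin f`, and
`‖x_k − x*‖ ≤ (b/a)·φ(f(x_k)) + √(f(x_{k−1})/a)` for every `k ≥ 1`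
(stated below with the index shift `k ↦ k+1`). -/
theorem stmt9 (f : H → EReal)
    (hbot : ∀ x, f x ≠ ⊥) (htop : ∃ x, f x ≠ ⊤)
    (hlsc : LowerSemicontinuous f)
    (hconv : ∀ x y : H, ∀ t : ℝ, 0 < t → t < 1 →
      f (t • x + (1 - t) • y) ≤ (t : EReal) * f x + ((1 - t : ℝ) : EReal) * f y)
    (hmin : ∃ z, z ∈ argminSet f ∧ f z = 0)
    (rbar : ℝ) (hrbar : 0 < rbar)
    (φ φ' : ℝ → ℝ)
    (hφcont : ContinuousOn φ (Ico 0 rbar))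
    (hφderiv : ∀ s ∈ Ioo (0 : ℝ) rbar, HasDerivAt φ (φ' s) s)
    (hφ'cont : ContinuousOn φ' (Ioo 0 rbar))
    (hφconc : ConcaveOn ℝ (Ico 0 rbar) φ)
    (hφ0 : φ 0 = 0)
    (hφ'pos : ∀ s ∈ Ioo (0 : ℝ) rbar, 0 < φ' s)
    (hKL : ∀ x, 0 < f x → f x < (rbar : EReal) →
      ∀ u ∈ subdiff f x, 1 ≤ φ' ((f x).toReal) * ‖u‖)
    (a b : ℝ) (ha : 0 < a) (hb : 0 < b)
    (x : ℕ → H) (hxdom : f (x 0) ≠ ⊤)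
    (hH1 : ∀ k : ℕ, f (x (k + 1)) + ((a * ‖x (k + 1) - x k‖ ^ 2 : ℝ) : EReal) ≤ f (x k))
    (hH2 : ∀ k : ℕ, ∃ ω ∈ subdiff f (x (k + 1)), ‖ω‖ ≤ b * ‖x (k + 1) - x k‖)
    (r0 : ℝ) (hr0 : r0 < rbar) (hfx0 : f (x 0) ≤ (r0 : EReal)) :
    ∃ xstar ∈ argminSet f, Tendsto x atTop (nhds xstar) ∧
      ∀ k : ℕ, ‖x (k + 1) - xstar‖ ≤
        (b / a) * φ ((f (x (k + 1))).toReal) + Real.sqrt ((f (x k)).toReal / a) := by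
  obtain ⟨z, hz, hfz⟩ := hmin
  have hge : ∀ y, (0 : EReal) ≤ f y := fun y => hfz ▸ hz y
  -- all iterates have finite value
  have hfin : ∀ k, f (x k) ≠ ⊤ := by
    intro k
    induction k with
    | zero => exact hxdom
    | succ n ih =>
      intro h
      have h1 := hH1 n
      rw [h, EReal.top_add_of_ne_bot (EReal.coe_ne_bot _)] at h1
      exact ih (top_le_iff.mp h1)
  set r : ℕ → ℝ := fun k => (f (x k)).toReal with hrdef
  set D : ℕ → ℝ := fun k => ‖x (k + 1) - x k‖ with hDdef
  have hDnn : ∀ k, 0 ≤ D k := fun k => norm_nonneg _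
  have hfr : ∀ k, f (x k) = ((r k : ℝ) : EReal) := fun k =>
    (EReal.coe_toReal (hfin k) (hbot _)).symm
  have hrnn : ∀ k, 0 ≤ r k := by
    intro k
    have := hge (x k)
    rw [hfr k] at this
    exact_mod_cast this
  have hH1R : ∀ k, r (k + 1) + a * D k ^ 2 ≤ r k := by
    intro k
    have h1 := hH1 k
    rw [hfr k, hfr (k + 1), ← EReal.coe_add, EReal.coe_le_coe_iff] at h1
    exact h1
  have hranti : ∀ k, r (k + 1) ≤ r k := by
    intro k
    have h1 := hH1R k
    nlinarith [sq_nonneg (D k)]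
  have hrmono : Antitone r := antitone_nat_of_succ_le hranti
  have hr00 : r 0 ≤ r0 := by
    rw [hfr 0] at hfx0
    exact_mod_cast hfx0
  have hrlt : ∀ k, r k < rbar := fun k =>
    lt_of_le_of_lt (le_trans (hrmono (Nat.zero_le k)) hr00) hr0
  -- φ is nonnegative on [0, rbar)
  have hφmono : StrictMonoOn φ (Ico 0 rbar) := by
    apply strictMonoOn_of_deriv_pos (convex_Ico 0 rbar) hφcont
    intro s hs
    rw [interior_Ico] at hs
    rw [(hφderiv s hs).deriv]
    exact hφ'pos s hs
  have hφnn : ∀ s, 0 ≤ s → s < rbar → 0 ≤ φ s := by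
    intro s hs hsr
    rcases eq_or_lt_of_le hs with h | h
    · rw [← h, hφ0]
    · rw [← hφ0]
      exact (hφmono ⟨le_refl 0, hrbar⟩ ⟨hs, hsr⟩ h).le
  have hφmono' : ∀ s t, 0 ≤ s → s ≤ t → t < rbar → φ s ≤ φ t := by
    intro s t hs hst htr
    rcases eq_or_lt_of_le hst with h | h
    · rw [h]
    · exact (hφmono ⟨hs, lt_trans h htr⟩ ⟨le_trans hs hst, htr⟩ h).le
  -- the KL inequality along the sequence
  have hKLstep : ∀ i, 0 < r (i + 1) → 1 ≤ φ' (r (i + 1)) * (b * D i) := by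
    intro i hpos
    obtain ⟨ω, hω, hωb⟩ := hH2 i
    have h1 : (0 : EReal) < f (x (i + 1)) := by
      rw [hfr (i + 1)]
      exact_mod_cast hpos
    have h2 : f (x (i + 1)) < (rbar : EReal) := by
      rw [hfr (i + 1)]
      exact_mod_cast hrlt (i + 1)
    have h3 := hKL (x (i + 1)) h1 h2 ω hω
    have h4 : φ' ((f (x (i + 1))).toReal) = φ' (r (i + 1)) := rfl
    rw [h4] at h3
    calc (1 : ℝ) ≤ φ' (r (i + 1)) * ‖ω‖ := h3
      _ ≤ φ' (r (i + 1)) * (b * D i) :=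
        mul_le_mul_of_nonneg_left hωb (hφ'pos _ ⟨hpos, hrlt _⟩).le
  -- the key one-step estimate
  have hstep : ∀ i, 2 * D (i + 1) ≤ (b / a) * (φ (r (i + 1)) - φ (r (i + 2))) + D i := by
    intro i
    rcases eq_or_lt_of_le (hrnn (i + 1)) with h0 | hpos
    · -- r (i+1) = 0 : the sequence has reached the minimum
      have h2 : r (i + 2) = 0 := le_antisymm (h0 ▸ hranti (i + 1)) (hrnn _)
      have hD0 : D (i + 1) = 0 := by
        have h3 := hH1R (i + 1)
        rw [h2, ← h0] at h3
        have h5 : D (i + 1) ^ 2 ≤ 0 := by nlinarith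
        have h6 : D (i + 1) ^ 2 = 0 := le_antisymm h5 (sq_nonneg _)
        exact pow_eq_zero_iff (two_ne_zero).elim |>.mp h6
      rw [hD0, h2, ← h0]
      simp
      exact hDnn i
    · -- r (i+1) > 0 : use KL + concavity
      have hKLi := hKLstep i hpos
      have hφ'pos' := hφ'pos (r (i + 1)) ⟨hpos, hrlt _⟩
      have hH1i := hH1R (i + 1)
      have htani : φ' (r (i + 1)) * (r (i + 1) - r (i + 2)) ≤ φ (r (i + 1)) - φ (r (i + 2)) := by
        rcases eq_or_lt_of_le (hranti (i + 1)) with heq | hlt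
        · rw [heq]
          simp
        · exact concave_deriv_le_slope rbar φ φ' hφderiv hφconc (r (i + 2)) (r (i + 1))
            (hrnn _) hlt (hrlt _)
      set X := (b / a) * (φ (r (i + 1)) - φ (r (i + 2))) with hXdef
      have hXnn : 0 ≤ X := by
        apply mul_nonneg (div_nonneg hb.le ha.le)
        have := hφmono' (r (i + 2)) (r (i + 1)) (hrnn _) (hranti _) (hrlt _)
        linarith
      have h4 : φ' (r (i + 1)) * (a * D (i + 1) ^ 2) ≤ φ (r (i + 1)) - φ (r (i + 2)) := by
        refine le_trans ?_ htani
        apply mul_le_mul_of_nonneg_left (by linarith) hφ'pos'.le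
      have h5 : a * D (i + 1) ^ 2 ≤ (φ (r (i + 1)) - φ (r (i + 2))) * (b * D i) := by
        calc a * D (i + 1) ^ 2 = a * D (i + 1) ^ 2 * 1 := by ring
          _ ≤ a * D (i + 1) ^ 2 * (φ' (r (i + 1)) * (b * D i)) := by
              apply mul_le_mul_of_nonneg_left hKLi (by positivity)
          _ = φ' (r (i + 1)) * (a * D (i + 1) ^ 2) * (b * D i) := by ring
          _ ≤ (φ (r (i + 1)) - φ (r (i + 2))) * (b * D i) := by
              apply mul_le_mul_of_nonneg_right h4
              positivity
      have h6 : D (i + 1) ^ 2 ≤ X * D i := by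
        rw [hXdef]
        rw [show (b / a) * (φ (r (i + 1)) - φ (r (i + 2))) * D i
          = (φ (r (i + 1)) - φ (r (i + 2))) * (b * D i) / a by field_simp]
        rw [le_div_iff₀ ha]
        linarith
      nlinarith [sq_nonneg (X - D i), hDnn i, hDnn (i + 1), hXnn]
  -- partial sum bound
  have hsum : ∀ k N, ∑ i ∈ Finset.range N, D (k + 1 + i) ≤ (b / a) * φ (r (k + 1)) + D k := by
    intro k N
    have hba : 0 ≤ (b / a) * φ (r (k + 1)) :=
      mul_nonneg (div_nonneg hb.le ha.le) (hφnn _ (hrnn _) (hrlt _))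
    have h2S : 2 * ∑ i ∈ Finset.range N, D (k + 1 + i) ≤
        (b / a) * (φ (r (k + 1)) - φ (r (k + 1 + N))) + ∑ i ∈ Finset.range N, D (k + i) := by
      have hs := Finset.sum_le_sum (fun i (_ : i ∈ Finset.range N) => hstep (k + i))
      have hL : ∑ i ∈ Finset.range N, 2 * D (k + i + 1) = 2 * ∑ i ∈ Finset.range N, D (k + 1 + i) := by
        rw [← Finset.mul_sum]
        congr 1
        exact Finset.sum_congr rfl fun i _ => by rw [Nat.add_right_comm]
      have hR : ∑ i ∈ Finset.range N, ((b / a) * (φ (r (k + i + 1)) - φ (r (k + i + 2))) + D (k + i))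
          = (b / a) * (φ (r (k + 1)) - φ (r (k + 1 + N))) + ∑ i ∈ Finset.range N, D (k + i) := by
        rw [Finset.sum_add_distrib, ← Finset.mul_sum]
        congr 2
        have htel := Finset.sum_range_sub' (fun i => φ (r (k + 1 + i))) N
        calc ∑ i ∈ Finset.range N, (φ (r (k + i + 1)) - φ (r (k + i + 2)))
            = ∑ i ∈ Finset.range N,
              ((fun i => φ (r (k + 1 + i))) i - (fun i => φ (r (k + 1 + i))) (i + 1)) :=
              Finset.sum_congr rfl fun i _ => by
                simp only
                rw [show k + i + 1 = k + 1 + i from by omega,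
                  show k + i + 2 = k + 1 + (i + 1) from by omega]
          _ = φ (r (k + 1 + 0)) - φ (r (k + 1 + N)) := htel
          _ = φ (r (k + 1)) - φ (r (k + 1 + N)) := by norm_num
      rw [hL] at hs
      rw [← hR]
      exact hs
    have hshift : ∑ i ∈ Finset.range N, D (k + i) ≤ D k + ∑ i ∈ Finset.range N, D (k + 1 + i) := by
      cases N with
      | zero => simp [hDnn k]
      | succ M =>
        rw [Finset.sum_range_succ' (fun i => D (k + i)) M]
        have h1 : ∑ i ∈ Finset.range M, D (k + (i + 1)) = ∑ i ∈ Finset.range M, D (k + 1 + i) :=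
          Finset.sum_congr rfl fun i _ => by rw [show k + (i + 1) = k + 1 + i by omega]
        rw [h1]
        have h2 : ∑ i ∈ Finset.range M, D (k + 1 + i) ≤ ∑ i ∈ Finset.range (M + 1), D (k + 1 + i) :=
          Finset.sum_le_sum_of_subset_of_nonneg
            (Finset.range_subset_range.mpr (Nat.le_succ M)) (fun i _ _ => hDnn _)
        simp only [Nat.add_zero]
        linarith
    have htail : 0 ≤ φ (r (k + 1 + N)) := hφnn _ (hrnn _) (hrlt _)
    have hba2 : 0 ≤ (b / a) := div_nonneg hb.le ha.le
    nlinarith [mul_nonneg hba2 htail]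
  -- summability of the steps, hence convergence
  have hsummable : Summable D := by
    apply summable_of_sum_range_le hDnn (c := D 0 + ((b / a) * φ (r 1) + D 0))
    intro N
    cases N with
    | zero =>
      simp only [Finset.range_zero, Finset.sum_empty]
      have h1 := hφnn (r 1) (hrnn 1) (hrlt 1)
      have h2 : 0 ≤ (b / a) * φ (r 1) := mul_nonneg (div_nonneg hb.le ha.le) h1
      linarith [hDnn 0]
    | succ M =>
      rw [Finset.sum_range_succ' D M]
      have h1 : ∑ i ∈ Finset.range M, D (i + 1) = ∑ i ∈ Finset.range M, D (0 + 1 + i) :=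
        Finset.sum_congr rfl fun i _ => by rw [show i + 1 = 0 + 1 + i by omega]
      rw [h1]
      have h2 := hsum 0 M
      simp only [Nat.zero_add] at h2 ⊢
      linarith
  have hcauchy : CauchySeq x := by
    apply cauchySeq_of_summable_dist
    have : (fun n => dist (x n) (x (n + 1))) = D := by
      funext n
      simp [hDdef, dist_eq_norm, norm_sub_rev]
    rw [this]
    exact hsummable
  obtain ⟨xstar, hx⟩ := cauchySeq_tendsto_of_complete hcauchy
  -- the values tend to 0
  have hDto0 : Tendsto D atTop (nhds 0) := hsummable.tendsto_atTop_zero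
  have hrbdd : BddBelow (range r) := ⟨0, fun y ⟨k, hk⟩ => hk ▸ hrnn k⟩
  have hrtends : Tendsto r atTop (nhds (⨅ i, r i)) := tendsto_atTop_ciInf hrmono hrbdd
  have hL0 : (⨅ i, r i) = 0 := by
    by_contra hL
    have hLnn : 0 ≤ ⨅ i, r i := le_ciInf hrnn
    have hLpos : 0 < ⨅ i, r i := lt_of_le_of_ne hLnn (Ne.symm hL)
    set L := ⨅ i, r i with hLdef
    have hLle : ∀ i, L ≤ r i := fun i => ciInf_le hrbdd i
    -- bound φ' on the compact interval [L, r 0]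
    have hsub : Icc L (r 0) ⊆ Ioo 0 rbar := fun y hy =>
      ⟨lt_of_lt_of_le hLpos hy.1, lt_of_le_of_lt hy.2 (hrlt 0)⟩
    have hcpt : IsCompact (Icc L (r 0)) := isCompact_Icc
    have hne : (Icc L (r 0)).Nonempty := ⟨r 0, hLle 0, le_refl _⟩
    obtain ⟨c, hc, hcmax'⟩ := hcpt.exists_isMaxOn hne (hφ'cont.mono hsub)
    have hcmax : ∀ y ∈ Icc L (r 0), φ' y ≤ φ' c := fun y hy => hcmax' hy
    set C := φ' c with hCdef
    have hCpos : 0 < C := hφ'pos c (hsub hc)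
    have hKey : ∀ i, 1 ≤ C * b * D i := by
      intro i
      have hpos : 0 < r (i + 1) := lt_of_lt_of_le hLpos (hLle (i + 1))
      have h1 := hKLstep i hpos
      have h2 : φ' (r (i + 1)) ≤ C := hcmax (r (i + 1)) ⟨hLle _, hrmono (Nat.zero_le _)⟩
      calc (1 : ℝ) ≤ φ' (r (i + 1)) * (b * D i) := h1
        _ ≤ C * (b * D i) := mul_le_mul_of_nonneg_right h2 (by positivity)
        _ = C * b * D i := by ring
    have hev : ∀ᶠ i in atTop, D i < 1 / (C * b) := by
      have := hDto0.eventually (eventually_lt_nhds (show (0:ℝ) < 1 / (C * b) by positivity))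
      exact this
    obtain ⟨i, hi⟩ := hev.exists
    have := hKey i
    have h3 : C * b * D i < C * b * (1 / (C * b)) :=
      mul_lt_mul_of_pos_left hi (by positivity)
    rw [mul_one_div, div_self (by positivity)] at h3
    linarith
  rw [hL0] at hrtends
  -- the limit is a minimizer
  have hf0 : f xstar ≤ 0 := by
    by_contra h
    push_neg at h
    obtain ⟨c, hc0, hcf⟩ := exists_between h
    have hev1 := hx.eventually (hlsc xstar c hcf)
    have hcne : c ≠ ⊤ := ne_top_of_lt hcf
    have hcnb : c ≠ ⊥ := ne_bot_of_gt hc0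
    have hctr : 0 < c.toReal := by
      have := EReal.coe_toReal hcne hcnb
      rw [← this] at hc0
      exact_mod_cast hc0
    have hev2 : ∀ᶠ k in atTop, r k < c.toReal :=
      hrtends.eventually (eventually_lt_nhds hctr)
    obtain ⟨k, hk1, hk2⟩ := (hev1.and hev2).exists
    have : c < ((r k : ℝ) : EReal) := by rw [← hfr k]; exact hk1
    rw [← EReal.coe_toReal hcne hcnb, EReal.coe_lt_coe_iff] at this
    linarith
  have hxargmin : xstar ∈ argminSet f := fun y => le_trans hf0 (hge y)
  refine ⟨xstar, hxargmin, hx, ?_⟩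
  intro k
  -- distance bound
  have hx' : Tendsto (fun N => x (k + 1 + N)) atTop (nhds xstar) := by
    have h1 : Tendsto (fun N : ℕ => N + (k + 1)) atTop atTop := tendsto_add_atTop_nat (k + 1)
    have := hx.comp h1
    convert this using 2 with N
    simp only [Function.comp]
    congr 1
    omega
  have hlim : Tendsto (fun N => ‖x (k + 1) - x (k + 1 + N)‖) atTop
      (nhds ‖x (k + 1) - xstar‖) := (tendsto_const_nhds.sub hx').norm
  have hNbd : ∀ N, ‖x (k + 1) - x (k + 1 + N)‖ ≤ (b / a) * φ (r (k + 1)) + D k := by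
    intro N
    have h1 := dist_le_range_sum_dist (fun i => x (k + 1 + i)) N
    simp only [Nat.add_zero] at h1
    have h2 : ∑ i ∈ Finset.range N, dist (x (k + 1 + i)) (x (k + 1 + (i + 1)))
        = ∑ i ∈ Finset.range N, D (k + 1 + i) := by
      refine Finset.sum_congr rfl fun i _ => ?_
      rw [dist_eq_norm, norm_sub_rev]
      congr 2
    rw [h2] at h1
    calc ‖x (k + 1) - x (k + 1 + N)‖ = dist (x (k + 1)) (x (k + 1 + N)) := (dist_eq_norm _ _).symm
      _ ≤ ∑ i ∈ Finset.range N, D (k + 1 + i) := h1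
      _ ≤ (b / a) * φ (r (k + 1)) + D k := hsum k N
  have hfinal := le_of_tendsto' hlim hNbd
  have hDk : D k ≤ Real.sqrt (r k / a) := by
    have h1 : D k ^ 2 ≤ r k / a := by
      rw [le_div_iff₀ ha]
      have := hH1R k
      nlinarith [hrnn (k + 1)]
    exact (Real.le_sqrt (hDnn k) (div_nonneg (hrnn k) ha.le)).mpr h1
  calc ‖x (k + 1) - xstar‖ ≤ (b / a) * φ (r (k + 1)) + D k := hfinal
    _ ≤ (b / a) * φ (r (k + 1)) + Real.sqrt (r k / a) := by linarith
end
end
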